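/- arXiv:math/0404103 — 6 statements merged into one kernel-verified Lean document; each statement's English description precedes it below -/
import Mathlib

section
/- Let m ≥ 2 and let X_1, X_2, … be i.i.d. random variables uniform on [m] := {1,…,m}. Let τ be the minimal integer such that (X_{τ-1}, X_τ) = (X_{μ-1}, X_μ) for some μ < τ, and for each n let Y_n := #{j < n : X_j = X_n}. Then m^{-1/2} · max{Y_n : n ≤ τ} → 0 in probability as m → ∞. -/
open Filter

lemma nat_bern (a b : ℕ) : ∀ n, a^n * (a + (n+1)*b) ≤ (a+b)^(n+1) := by
  intro n
  induction n with
  | zero => simp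
  | succ n ih =>
    calc a^(n+1) * (a + (n+2)*b)
        = a * (a^n * (a + (n+1)*b)) + b * a^(n+1) := by ring
      _ ≤ a * (a+b)^(n+1) + b * (a+b)^(n+1) := by
          gcongr <;> first
            | exact ih
            | exact Nat.pow_le_pow_left (by omega) _
            | omega
      _ = (a+b)^(n+2) := by ring

lemma nat_desc_le (s a : ℕ) : ∀ n, Nat.descFactorial s (a+n) ≤ s^a * (s-a)^n := by
  intro n
  induction n with
  | zero => simpa using Nat.descFactorial_le_pow s a
  | succ n ih =>
    rw [show a + (n+1) = (a+n) + 1 from rfl, Nat.descFactorial_succ]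
    calc (s - (a+n)) * Nat.descFactorial s (a+n)
        ≤ (s - a) * (s^a * (s-a)^n) := by
          exact Nat.mul_le_mul (Nat.sub_le_sub_left (by omega) s) ih
      _ = s^a * (s-a)^(n+1) := by ring

lemma nat_pow_le_desc : ∀ (k n : ℕ), (n - k)^k ≤ Nat.descFactorial n k := by
  intro k
  induction k with
  | zero => simp
  | succ k ih =>
    intro n
    rw [Nat.descFactorial_succ]
    calc (n - (k+1))^(k+1) = (n - (k+1)) * (n - (k+1))^k := by ring
      _ ≤ (n - k) * (n - k)^k := by gcongr <;> omega
      _ ≤ (n - k) * Nat.descFactorial n k := by gcongr; exact ih n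

lemma partA_nat (m g : ℕ) (hm : 1 ≤ m) (hg : 1 ≤ g) (hgm : g ≤ m) :
    Nat.descFactorial (m*m) (2*(m*g)) * g ≤ m^(4*(m*g)) := by
  set H := m * g with hH
  set s := m * m with hs
  have hHs : H ≤ s := by exact Nat.mul_le_mul_left m hgm
  have hH1 : 1 ≤ H := Nat.one_le_iff_ne_zero.mpr (by positivity)
  have h1 : Nat.descFactorial s (2*H) ≤ s^H * (s-H)^H := by
    have := nat_desc_le s H H
    rwa [show H + H = 2*H by ring] at this
  have h2 : (s-H)^H * g ≤ s^H := by
    have hb := nat_bern (s-H) H (H-1)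
    rw [show (H-1)+1 = H by omega] at hb
    have hb' : (s-H)^(H-1) * ((s-H) + H*H) ≤ s^H := by
      have hc : s - H + H = s := by omega
      rwa [hc] at hb
    have hsplit : (s-H)^H = (s-H)^(H-1) * (s-H) := by
      rw [← pow_succ, show H-1+1 = H by omega]
    calc (s-H)^H * g = (s-H)^(H-1) * ((s-H) * g) := by rw [hsplit]; ring
      _ ≤ (s-H)^(H-1) * ((s-H) + H*H) := by
          gcongr
          calc (s-H) * g ≤ s * g := by gcongr; omega
            _ ≤ H * H := by
                rw [hH, hs]
                calc m * m * g ≤ m * m * (g * g) :=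
                      Nat.mul_le_mul_left _ (Nat.le_mul_of_pos_left g (by omega))
                  _ = m * g * (m * g) := by ring
            _ ≤ (s-H) + H*H := by omega
      _ ≤ s^H := hb'
  calc Nat.descFactorial s (2*H) * g ≤ (s^H * (s-H)^H) * g := by gcongr
    _ = s^H * ((s-H)^H * g) := by ring
    _ ≤ s^H * s^H := by gcongr
    _ = s^(H+H) := by rw [← pow_add]
    _ = m^(4*H) := by rw [hs, show m*m = m^2 by ring, ← pow_mul]; congr 1; omega

lemma partB_nat (m g k : ℕ) (hm : 1 ≤ m) (hg : 1 ≤ g)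
    (h1 : 16*g^2 ≤ k/2) (h2 : 16^8 * m^3 ≤ (k/2)^7) (h3 : 7 ≤ k/2)
    (hg16 : g^16 ≤ m) :
    4*(m*g) * Nat.choose (4*(m*g)) k * m * m ≤ m^(k+1) := by
  set t := 4*(m*g) with ht
  set h := k/2 with hh
  have hfact : h^h ≤ Nat.factorial k := by
    calc h^h = (2*h - h)^h := by rw [show 2*h - h = h by omega]
      _ ≤ Nat.descFactorial (2*h) h := nat_pow_le_desc h (2*h)
      _ = Nat.factorial (2*h) / Nat.factorial (2*h - h) := Nat.descFactorial_eq_div (by omega)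
      _ ≤ Nat.factorial (2*h) := Nat.div_le_self _ _
      _ ≤ Nat.factorial k := Nat.factorial_le (by omega)
  have hC : Nat.choose t k * h^h ≤ t^k := by
    calc Nat.choose t k * h^h ≤ Nat.choose t k * Nat.factorial k :=
          Nat.mul_le_mul_left _ hfact
      _ = Nat.factorial k * Nat.choose t k := by ring
      _ = Nat.descFactorial t k := (Nat.descFactorial_eq_factorial_mul_choose t k).symm
      _ ≤ t^k := Nat.descFactorial_le_pow t k
  have hmain : (4*g)^(k+1) * (m*m) ≤ h^h := by
    have hk1 : k + 1 ≤ 2*(h+1) := by omega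
    have hA : (4*g)^(k+1) ≤ (16*g^2)^(h+1) := by
      calc (4*g)^(k+1) ≤ (4*g)^(2*(h+1)) := Nat.pow_le_pow_right (by omega) hk1
        _ = (16*g^2)^(h+1) := by rw [pow_mul]; ring_nf
    calc (4*g)^(k+1) * (m*m) ≤ (16*g^2)^(h+1) * (m*m) := by gcongr
      _ = (16*g^2)^(h-7) * ((16*g^2)^8 * (m*m)) := by
          rw [show h+1 = (h-7)+8 by omega, pow_add]; ring
      _ ≤ h^(h-7) * ((16*g^2)^8 * (m*m)) := by gcongr
      _ ≤ h^(h-7) * h^7 := by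
          gcongr
          calc (16*g^2)^8 * (m*m) = 16^8 * g^16 * (m * m) := by ring
            _ ≤ 16^8 * m * (m * m) := by gcongr
            _ = 16^8 * m^3 := by ring
            _ ≤ h^7 := h2
      _ = h^h := by rw [← pow_add, show h - 7 + 7 = h by omega]
  have hhpos : 0 < h^h := Nat.pow_pos (by omega)
  apply Nat.le_of_mul_le_mul_right _ hhpos
  calc t * Nat.choose t k * m * m * h^h
      = (Nat.choose t k * h^h) * (t * (m*m)) := by ring
    _ ≤ t^k * (t * (m*m)) := by gcongr
    _ = ((4*g)^(k+1) * (m*m)) * m^(k+1) := by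
        rw [ht, show 4*(m*g) = (4*g)*m by ring]
        rw [show ((4*g)*m)^k * ((4*g)*m*(m*m)) = ((4*g)*m)^(k+1)*(m*m) by ring, mul_pow]
        ring
    _ ≤ h^h * m^(k+1) := by gcongr
    _ = m^(k+1) * h^h := by ring

open MeasureTheory ProbabilityTheory
open scoped ENNReal

section Meas

variable {Ω : Type*} [MeasurableSpace Ω] (P : Measure Ω) [IsProbabilityMeasure P]
  {m : ℕ} (X : ℕ → Ω → ℕ)

lemma keyP (hm : 2 ≤ m) (hmeas : ∀ n, Measurable (X n))
    (hunif : ∀ n (j : ℕ), Measure.map (X (n+1)) P {j}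
      = if j ∈ Finset.Icc 1 m then ((m:ℝ≥0∞))⁻¹ else 0)
    (hindep : iIndepFun (fun n => X (n+1)) P)
    (s : Finset ℕ) (hs : ∀ i ∈ s, 1 ≤ i) (v : ℕ → ℕ) :
    P (⋂ i ∈ s, (X i)⁻¹' {v i}) ≤ ((m:ℝ≥0∞)⁻¹)^s.card := by
  classical
  set s' := s.image (· - 1) with hs'
  have hinj : Set.InjOn (· - 1) s := by
    intro a ha b hb hab
    have h1 := hs a ha; have h2 := hs b hb
    have hab' : a - 1 = b - 1 := hab
    omega
  have hcard : s'.card = s.card := Finset.card_image_of_injOn hinj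
  have hset : (⋂ i ∈ s', (X (i+1))⁻¹' {v (i+1)}) = ⋂ i ∈ s, (X i)⁻¹' {v i} := by
    ext ω
    simp only [Set.mem_iInter, Set.mem_preimage, Set.mem_singleton_iff, Finset.mem_image, hs']
    constructor
    · intro H j hj
      have := H (j-1) ⟨j, hj, rfl⟩
      rwa [Nat.sub_add_cancel (hs j hj)] at this
    · rintro H i ⟨j, hj, rfl⟩
      rw [Nat.sub_add_cancel (hs j hj)]
      exact H j hj
  have hprod := hindep.meas_biInter (S := s') (s := fun i => (X (i+1))⁻¹' {v (i+1)})
    (fun i _ => ⟨{v (i+1)}, measurableSet_singleton _, rfl⟩)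
  rw [hset] at hprod
  rw [hprod, ← hcard]
  calc ∏ i ∈ s', P ((X (i+1))⁻¹' {v (i+1)})
      ≤ ∏ _i ∈ s', (m:ℝ≥0∞)⁻¹ := by
        refine Finset.prod_le_prod' ?_
        intro i _
        rw [← Measure.map_apply (hmeas (i+1)) (measurableSet_singleton _), hunif]
        split <;> simp
    _ = ((m:ℝ≥0∞)⁻¹)^s'.card := Finset.prod_const _

lemma nullP (hm : 2 ≤ m) (hmeas : ∀ n, Measurable (X n))
    (hunif : ∀ n (j : ℕ), Measure.map (X (n+1)) P {j}
      = if j ∈ Finset.Icc 1 m then ((m:ℝ≥0∞))⁻¹ else 0)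
    (i : ℕ) :
    P ((X (i+1))⁻¹' (↑(Finset.Icc 1 m))ᶜ) = 0 := by
  classical
  set μ' := Measure.map (X (i+1)) P with hμ'
  have : IsProbabilityMeasure μ' := Measure.isProbabilityMeasure_map (hmeas (i+1)).aemeasurable
  have hIcc : μ' ↑(Finset.Icc 1 m) = 1 := by
    have hsum : μ' ↑(Finset.Icc 1 m) = ∑ j ∈ Finset.Icc 1 m, μ' {j} := by
      rw [show (↑(Finset.Icc 1 m) : Set ℕ) = ⋃ j ∈ Finset.Icc 1 m, {j} by ext x; simp]
      exact measure_biUnion_finset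
        (fun a _ b _ hab => by simp [Set.disjoint_singleton, hab])
        (fun _ _ => measurableSet_singleton _)
    rw [hsum]
    have : ∀ j ∈ Finset.Icc 1 m, μ' {j} = (m:ℝ≥0∞)⁻¹ := by
      intro j hj; rw [hμ', hunif]; simp [hj]
    rw [Finset.sum_congr rfl this, Finset.sum_const, Nat.card_Icc]
    simp only [nsmul_eq_mul]
    rw [show m + 1 - 1 = m by omega]
    exact ENNReal.mul_inv_cancel (by exact_mod_cast by omega) (by simp)
  have hmeasIcc : MeasurableSet (↑(Finset.Icc 1 m) : Set ℕ) :=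
    (Finset.Icc 1 m).finite_toSet.measurableSet
  rw [← Measure.map_apply (hmeas (i+1)) hmeasIcc.compl, ← hμ',
    measure_compl hmeasIcc (by simp), hIcc]
  simp

end Meas

lemma enn_helper (a b c : ℕ) (hb : b ≠ 0) (hc : c ≠ 0) (h : a * c ≤ b) :
    (a:ℝ≥0∞) * ((b:ℝ≥0∞))⁻¹ ≤ ((c:ℝ≥0∞))⁻¹ := by
  have hb0 : (b:ℝ≥0∞) ≠ 0 := by exact_mod_cast hb
  have hc0 : (c:ℝ≥0∞) ≠ 0 := by exact_mod_cast hc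
  have hctop : (c:ℝ≥0∞) ≠ ∞ := by simp
  rw [← div_eq_mul_inv, ENNReal.div_le_iff_le_mul (Or.inl hb0) (Or.inl (by simp : (b:ℝ≥0∞) ≠ ∞))]
  have h' : (a:ℝ≥0∞) * c ≤ b := by exact_mod_cast h
  calc (a:ℝ≥0∞) = (c:ℝ≥0∞)⁻¹ * ((a:ℝ≥0∞) * c) := by
        rw [mul_comm ((a:ℝ≥0∞)) _, ← mul_assoc, ENNReal.inv_mul_cancel hc0 hctop, one_mul]
    _ ≤ (c:ℝ≥0∞)⁻¹ * b := by gcongr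

def gfun (m : ℕ) : ℕ := Nat.sqrt (Nat.sqrt (Nat.sqrt (Nat.sqrt m)))

noncomputable def wfun (m : ℕ) : ℝ :=
  Real.sqrt (Real.sqrt (Real.sqrt (Real.sqrt (m:ℝ))))

lemma gfun_pow16 (m : ℕ) : (gfun m)^16 ≤ m := by
  have h1 : gfun m ^ 2 ≤ Nat.sqrt (Nat.sqrt (Nat.sqrt m)) := Nat.sqrt_le' _
  have h2 : (Nat.sqrt (Nat.sqrt (Nat.sqrt m)))^2 ≤ Nat.sqrt (Nat.sqrt m) := Nat.sqrt_le' _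
  have h3 : (Nat.sqrt (Nat.sqrt m))^2 ≤ Nat.sqrt m := Nat.sqrt_le' _
  have h4 : (Nat.sqrt m)^2 ≤ m := Nat.sqrt_le' _
  calc (gfun m)^16 = ((((gfun m)^2)^2)^2)^2 := by ring
    _ ≤ m := by
        calc ((((gfun m)^2)^2)^2)^2 ≤ (((Nat.sqrt (Nat.sqrt (Nat.sqrt m)))^2)^2)^2 := by gcongr
          _ ≤ ((Nat.sqrt (Nat.sqrt m))^2)^2 := by gcongr
          _ ≤ (Nat.sqrt m)^2 := by gcongr
          _ ≤ m := h4

lemma gfun_le_self (m : ℕ) : gfun m ≤ m :=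
  le_trans (Nat.sqrt_le_self _) (le_trans (Nat.sqrt_le_self _)
    (le_trans (Nat.sqrt_le_self _) (Nat.sqrt_le_self _)))

lemma one_le_gfun {m : ℕ} (hm : 1 ≤ m) : 1 ≤ gfun m := by
  have : ∀ n : ℕ, 1 ≤ n → 1 ≤ Nat.sqrt n := fun n hn => Nat.sqrt_pos.mpr hn
  exact this _ (this _ (this _ (this _ hm)))

lemma tendsto_nat_sqrt : Tendsto Nat.sqrt atTop atTop := by
  apply tendsto_atTop_atTop.mpr
  intro b
  exact ⟨b^2, fun a ha => by
    have := Nat.sqrt_le_sqrt ha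
    rwa [Nat.sqrt_eq'] at this⟩

lemma tendsto_gfun : Tendsto gfun atTop atTop :=
  tendsto_nat_sqrt.comp (tendsto_nat_sqrt.comp (tendsto_nat_sqrt.comp tendsto_nat_sqrt))

lemma tendsto_real_sqrt : Tendsto Real.sqrt atTop atTop := by
  apply tendsto_atTop_atTop.mpr
  intro b
  refine ⟨b^2 + 1, fun a ha => ?_⟩
  calc b ≤ |b| := le_abs_self b
    _ = Real.sqrt (b^2) := (Real.sqrt_sq_eq_abs b).symm
    _ ≤ Real.sqrt a := Real.sqrt_le_sqrt (by nlinarith)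

lemma tendsto_wfun : Tendsto wfun atTop atTop :=
  tendsto_real_sqrt.comp (tendsto_real_sqrt.comp (tendsto_real_sqrt.comp
    (tendsto_real_sqrt.comp tendsto_natCast_atTop_atTop)))

lemma wfun_pow8 (m : ℕ) : (wfun m)^8 = Real.sqrt (m:ℝ) := by
  have h1 : (wfun m)^2 = Real.sqrt (Real.sqrt (Real.sqrt (m:ℝ))) :=
    Real.sq_sqrt (Real.sqrt_nonneg _)
  have h2 : (Real.sqrt (Real.sqrt (Real.sqrt (m:ℝ))))^2 = Real.sqrt (Real.sqrt (m:ℝ)) :=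
    Real.sq_sqrt (Real.sqrt_nonneg _)
  have h3 : (Real.sqrt (Real.sqrt (m:ℝ)))^2 = Real.sqrt (m:ℝ) :=
    Real.sq_sqrt (Real.sqrt_nonneg _)
  calc (wfun m)^8 = (((wfun m)^2)^2)^2 := by ring
    _ = Real.sqrt (m:ℝ) := by rw [h1, h2, h3]

lemma wfun_pow16 (m : ℕ) : (wfun m)^16 = (m:ℝ) := by
  have : ((wfun m)^8)^2 = (m:ℝ) := by
    rw [wfun_pow8]; exact Real.sq_sqrt (by positivity)
  calc (wfun m)^16 = ((wfun m)^8)^2 := by ring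
    _ = (m:ℝ) := this

lemma wfun_nonneg (m : ℕ) : 0 ≤ wfun m := Real.sqrt_nonneg _

lemma gfun_le_wfun (m : ℕ) : (gfun m : ℝ) ≤ wfun m := by
  calc (gfun m : ℝ) ≤ Real.sqrt (Nat.sqrt (Nat.sqrt (Nat.sqrt m)) : ℝ) :=
        Real.nat_sqrt_le_real_sqrt
    _ ≤ Real.sqrt (Real.sqrt (Nat.sqrt (Nat.sqrt m) : ℝ)) :=
        Real.sqrt_le_sqrt Real.nat_sqrt_le_real_sqrt
    _ ≤ Real.sqrt (Real.sqrt (Real.sqrt (Nat.sqrt m : ℝ))) :=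
        Real.sqrt_le_sqrt (Real.sqrt_le_sqrt Real.nat_sqrt_le_real_sqrt)
    _ ≤ wfun m :=
        Real.sqrt_le_sqrt (Real.sqrt_le_sqrt (Real.sqrt_le_sqrt Real.nat_sqrt_le_real_sqrt))

lemma evcond (ε : ℝ) (hε : 0 < ε) :
    ∀ᶠ m : ℕ in atTop,
      16 * (gfun m)^2 ≤ (⌊ε * Real.sqrt (m:ℝ)⌋₊ + 1) / 2 ∧
      16^8 * m^3 ≤ ((⌊ε * Real.sqrt (m:ℝ)⌋₊ + 1) / 2)^7 ∧
      7 ≤ (⌊ε * Real.sqrt (m:ℝ)⌋₊ + 1) / 2 := by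
  set W : ℝ := max 1 (max (4/ε) (max (64/ε) (max (112/ε) (16^8*(4/ε)^7)))) with hW
  filter_upwards [tendsto_wfun.eventually_ge_atTop W] with m hWm
  set w := wfun m with hw
  have hw1 : 1 ≤ w := le_trans (le_max_left _ _) hWm
  have hw0 : 0 ≤ w := by linarith
  have hwa : 4/ε ≤ w := le_trans (le_trans (le_max_left _ _) (le_max_right _ _)) hWm
  have hwb : 64/ε ≤ w :=
    le_trans (le_trans (le_trans (le_max_left _ _) (le_max_right _ _)) (le_max_right _ _)) hWm
  have hwc : 112/ε ≤ w :=
    le_trans (le_trans (le_trans (le_trans (le_max_left _ _) (le_max_right _ _))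
      (le_max_right _ _)) (le_max_right _ _)) hWm
  have hwd : 16^8*(4/ε)^7 ≤ w :=
    le_trans (le_trans (le_trans (le_trans (le_max_right _ _) (le_max_right _ _))
      (le_max_right _ _)) (le_max_right _ _)) hWm
  have hwpow : ∀ j : ℕ, 1 ≤ j → w ≤ w^j := fun j hj => le_self_pow₀ hw1 (by omega)
  set y := ε * Real.sqrt (m:ℝ) with hy0
  have hy : y = ε * w^8 := by rw [hy0, hw, wfun_pow8]
  have hy0' : 0 ≤ y := by
    rw [hy]; positivity
  set k := ⌊y⌋₊ + 1 with hk
  set h := k / 2 with hh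
  have hyk : y < (k:ℝ) := by
    rw [hk]; push_cast; exact Nat.lt_floor_add_one y
  have hkh : (k:ℝ) ≤ 2*(h:ℝ) + 1 := by
    have : k ≤ 2*h + 1 := by omega
    exact_mod_cast this
  have hy4 : y ≥ 4 := by
    calc (4:ℝ) = ε * (4/ε) := by field_simp
      _ ≤ ε * w := by gcongr
      _ ≤ ε * w^8 := by gcongr; exact hwpow 8 (by omega)
      _ = y := hy.symm
  have hhy : y/4 ≤ (h:ℝ) := by linarith
  refine ⟨?_, ?_, ?_⟩
  · -- 16 g² ≤ h
    have : 16 * ((gfun m : ℝ))^2 ≤ (h:ℝ) := by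
      have hg2 : ((gfun m : ℝ))^2 ≤ w^2 :=
        pow_le_pow_left₀ (by positivity) (gfun_le_wfun m) 2
      have key : 16 * w^2 ≤ y/4 := by
        rw [hy]
        have h8 : w^8 = w^2 * w^6 := by ring
        have hw6 : 64/ε ≤ w^6 := le_trans hwb (hwpow 6 (by omega))
        calc 16 * w^2 = (ε/4) * (w^2 * (64/ε)) := by field_simp; ring
          _ ≤ (ε/4) * (w^2 * w^6) :=
              mul_le_mul_of_nonneg_left
                (mul_le_mul_of_nonneg_left hw6 (by positivity)) (by linarith)
          _ = ε * w^8 / 4 := by ring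
      linarith [hg2, key, hhy]
    exact_mod_cast (by push_cast; linarith [this] : ((16 * (gfun m)^2 : ℕ):ℝ) ≤ (h:ℝ))
  · -- 16^8 m³ ≤ h^7
    have hm3 : ((m:ℝ))^3 = w^48 := by
      rw [← wfun_pow16]; ring
    have hstep : 16^8 * w^48 ≤ (y/4)^7 := by
      have : (y/4)^7 = (ε/4)^7 * w^56 := by rw [hy]; ring
      rw [this]
      have hw8 : 16^8*(4/ε)^7 ≤ w^8 := le_trans hwd (hwpow 8 (by omega))
      calc (16:ℝ)^8 * w^48 = ((ε/4)^7 * (16^8*(4/ε)^7)) * w^48 := by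
            field_simp
        _ ≤ ((ε/4)^7 * w^8) * w^48 :=
            mul_le_mul_of_nonneg_right
              (mul_le_mul_of_nonneg_left hw8 (pow_nonneg (by linarith) 7)) (by positivity)
        _ = (ε/4)^7 * w^56 := by ring
    have : (16^8 * (m:ℝ)^3) ≤ (h:ℝ)^7 := by
      have h74 : (y/4)^7 ≤ (h:ℝ)^7 := pow_le_pow_left₀ (by linarith) hhy 7
      calc 16^8 * (m:ℝ)^3 = 16^8 * w^48 := by rw [hm3]
        _ ≤ (y/4)^7 := hstep
        _ ≤ (h:ℝ)^7 := h74
    exact_mod_cast (by push_cast; linarith [this] : ((16^8 * m^3 : ℕ):ℝ) ≤ ((h^7 : ℕ):ℝ))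
  · -- 7 ≤ h
    have h28 : (28:ℝ) ≤ y / 4 := by
      calc (28:ℝ) = ε * (112/ε) / 4 := by field_simp; ring
        _ ≤ ε * w / 4 := by gcongr
        _ ≤ ε * w^8 / 4 := by gcongr; exact hwpow 8 (by omega)
        _ = y / 4 := by rw [hy]
    have : (7:ℝ) ≤ (h:ℝ) := by linarith [hhy]
    exact_mod_cast this
/-- With `τ` the first time a pair `(X (n-1), X n)` repeats an
earlier pair and `Y n = #{j < n : X j = X n}`, the quantity
`m^{-1/2} · max {Y n : n ≤ τ}` tends to `0` in probability as `m → ∞`. -/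
theorem stmt_6
    {Ω : ℕ → Type*} [∀ m, MeasurableSpace (Ω m)]
    (P : ∀ m, Measure (Ω m)) (hP : ∀ m, IsProbabilityMeasure (P m))
    (X : ∀ m, ℕ → Ω m → ℕ)
    (hmeas : ∀ m n, Measurable (X m n))
    (hunif : ∀ m, 2 ≤ m → ∀ n (j : ℕ),
      Measure.map (X m (n + 1)) (P m) {j}
        = if j ∈ Finset.Icc 1 m then ((m : ℝ≥0∞))⁻¹ else 0)
    (hindep : ∀ m, 2 ≤ m →
      iIndepFun (fun n => X m (n + 1)) (P m))
    (τ : ∀ m, Ω m → ℕ)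
    (hτ : ∀ m (ω : Ω m), τ m ω
        = sInf {n | ∃ j, 2 ≤ j ∧ j < n ∧
            X m (n - 1) ω = X m (j - 1) ω ∧ X m n ω = X m j ω})
    :
    ∀ ε : ℝ, 0 < ε →
      Tendsto
        (fun m => P m {ω | ε <
          (((Finset.Icc 1 (τ m ω)).sup fun n =>
              ((Finset.Ico 1 n).filter fun j => X m j ω = X m n ω).card : ℕ) : ℝ)
            / Real.sqrt m})
        atTop (nhds 0) := by
  classical
  intro ε hε
  have hbound : Tendsto (fun m : ℕ => ((gfun m : ℝ≥0∞))⁻¹ + ((m : ℝ≥0∞))⁻¹)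
      atTop (nhds 0) := by
    have h1 : Tendsto (fun m : ℕ => ((gfun m : ℝ≥0∞))⁻¹) atTop (nhds 0) :=
      ENNReal.tendsto_inv_nat_nhds_zero.comp tendsto_gfun
    have h2 : Tendsto (fun m : ℕ => ((m : ℝ≥0∞))⁻¹) atTop (nhds 0) :=
      ENNReal.tendsto_inv_nat_nhds_zero
    simpa using h1.add h2
  refine tendsto_of_tendsto_of_tendsto_of_le_of_le' tendsto_const_nhds hbound
    (Eventually.of_forall fun m => zero_le) ?_
  filter_upwards [evcond ε hε, eventually_ge_atTop 2] with m hev hm2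
  haveI : IsProbabilityMeasure (P m) := hP m
  -- notation
  set g := gfun m with hgdef
  set H := m * g with hHdef
  set t := 4 * H with htdef
  set k := ⌊ε * Real.sqrt (m:ℝ)⌋₊ + 1 with hkdef
  have hg1 : 1 ≤ g := one_le_gfun (by omega)
  have hgm : g ≤ m := gfun_le_self m
  obtain ⟨hev1, hev2, hev3⟩ := hev
  -- events
  set Y : ℕ → Ω m → ℕ := fun n ω => ((Finset.Ico 1 n).filter fun j => X m j ω = X m n ω).card
    with hYdef
  set Bad1 : Set (Ω m) := {ω | t < τ m ω} with hBad1
  set YBig : ℕ → Set (Ω m) := fun n => {ω | k ≤ Y n ω} with hYBig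
  -- Step 1: main inclusion
  have hincl : {ω | ε <
      (((Finset.Icc 1 (τ m ω)).sup fun n =>
          ((Finset.Ico 1 n).filter fun j => X m j ω = X m n ω).card : ℕ) : ℝ)
        / Real.sqrt m} ⊆ Bad1 ∪ ⋃ n ∈ Finset.Icc 1 t, YBig n := by
    intro ω hω
    simp only [Set.mem_setOf_eq] at hω
    have hsq : (0:ℝ) < Real.sqrt m := Real.sqrt_pos.mpr (by positivity)
    set sup := (Finset.Icc 1 (τ m ω)).sup fun n => Y n ω with hsupdef
    have hsup : ε * Real.sqrt m < (sup : ℝ) := by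
      rw [← lt_div_iff₀ hsq]; exact hω
    have hks : k ≤ sup := by
      have h1 : (⌊ε * Real.sqrt (m:ℝ)⌋₊ : ℝ) ≤ ε * Real.sqrt m :=
        Nat.floor_le (by positivity)
      have : (⌊ε * Real.sqrt (m:ℝ)⌋₊ : ℝ) < (sup:ℝ) := lt_of_le_of_lt h1 hsup
      have := Nat.cast_lt.mp this
      omega
    have hne : (Finset.Icc 1 (τ m ω)).Nonempty := by
      rcases Finset.eq_empty_or_nonempty (Finset.Icc 1 (τ m ω)) with he | hne
      · exfalso
        have h0 : sup = 0 := by rw [hsupdef, he]; simp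
        omega
      · exact hne
    obtain ⟨n, hn, hsn⟩ := Finset.exists_mem_eq_sup _ hne (fun n => Y n ω)
    rw [Finset.mem_Icc] at hn
    have hkY : k ≤ Y n ω := by rw [hsupdef, hsn] at hks; exact hks
    by_cases hτt : τ m ω ≤ t
    · right
      exact Set.mem_iUnion₂.mpr ⟨n, Finset.mem_Icc.mpr ⟨hn.1, le_trans hn.2 hτt⟩, hkY⟩
    · left
      exact lt_of_not_ge hτt
  -- Step 2: bound P(YBig n)
  have hYBigBound : ∀ n ∈ Finset.Icc 1 t,
      P m (YBig n) ≤ (Nat.choose t k : ℝ≥0∞) * ((m:ℝ≥0∞) * ((m:ℝ≥0∞)⁻¹)^(k+1)) := by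
    intro n hn
    rw [Finset.mem_Icc] at hn
    have hsub : YBig n ⊆
        (⋃ S ∈ (Finset.Ico 1 n).powersetCard k, ⋃ v ∈ Finset.Icc 1 m,
          ⋂ j ∈ insert n S, (X m j)⁻¹' {v})
        ∪ (X m n)⁻¹' (↑(Finset.Icc 1 m))ᶜ := by
      intro ω hω
      simp only [hYBig, Set.mem_setOf_eq] at hω
      obtain ⟨S, hSsub, hScard⟩ := Finset.exists_subset_card_eq hω
      by_cases hv : X m n ω ∈ Finset.Icc 1 m
      · left
        refine Set.mem_iUnion₂.mpr ⟨S, ?_, Set.mem_iUnion₂.mpr ⟨X m n ω, hv, ?_⟩⟩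
        · rw [Finset.mem_powersetCard]
          exact ⟨hSsub.trans (Finset.filter_subset _ _), hScard⟩
        · simp only [Set.mem_iInter]
          intro j hj
          rw [Finset.mem_insert] at hj
          rcases hj with rfl | hj
          · rfl
          · exact (Finset.mem_filter.mp (hSsub hj)).2
      · right
        simpa using hv
    calc P m (YBig n)
        ≤ P m (⋃ S ∈ (Finset.Ico 1 n).powersetCard k, ⋃ v ∈ Finset.Icc 1 m,
            ⋂ j ∈ insert n S, (X m j)⁻¹' {v})
          + P m ((X m n)⁻¹' (↑(Finset.Icc 1 m))ᶜ) :=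
          le_trans (measure_mono hsub) (measure_union_le _ _)
      _ ≤ (∑ S ∈ (Finset.Ico 1 n).powersetCard k, ∑ v ∈ Finset.Icc 1 m,
            ((m:ℝ≥0∞)⁻¹)^(k+1)) + 0 := by
          gcongr
          · calc P m (⋃ S ∈ (Finset.Ico 1 n).powersetCard k, ⋃ v ∈ Finset.Icc 1 m,
                ⋂ j ∈ insert n S, (X m j)⁻¹' {v})
                ≤ ∑ S ∈ (Finset.Ico 1 n).powersetCard k,
                    P m (⋃ v ∈ Finset.Icc 1 m, ⋂ j ∈ insert n S, (X m j)⁻¹' {v}) :=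
                  measure_biUnion_finset_le _ _
              _ ≤ ∑ S ∈ (Finset.Ico 1 n).powersetCard k, ∑ v ∈ Finset.Icc 1 m,
                    P m (⋂ j ∈ insert n S, (X m j)⁻¹' {v}) := by
                  gcongr with S hS
                  exact measure_biUnion_finset_le _ _
              _ ≤ ∑ S ∈ (Finset.Ico 1 n).powersetCard k, ∑ v ∈ Finset.Icc 1 m,
                    ((m:ℝ≥0∞)⁻¹)^(k+1) := by
                  gcongr with S hS v hv
                  rw [Finset.mem_powersetCard] at hS
                  have hnotmem : n ∉ S := fun hns => by
                    have := hS.1 hns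
                    rw [Finset.mem_Ico] at this
                    omega
                  have hcard : (insert n S).card = k + 1 := by
                    rw [Finset.card_insert_of_notMem hnotmem, hS.2]
                  have h1 : ∀ j ∈ insert n S, 1 ≤ j := by
                    intro j hj
                    rw [Finset.mem_insert] at hj
                    rcases hj with rfl | hj
                    · omega
                    · have := hS.1 hj
                      rw [Finset.mem_Ico] at this
                      omega
                  have := keyP (P m) (X m) hm2 (hmeas m) (hunif m hm2) (hindep m hm2)
                    (insert n S) h1 (fun _ => v)
                  rwa [hcard] at this
          · have := nullP (P m) (X m) hm2 (hmeas m) (hunif m hm2) (n-1)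
            rw [show n - 1 + 1 = n by omega] at this
            exact le_of_eq this
      _ = (Nat.choose (n-1) k : ℝ≥0∞) * ((m:ℝ≥0∞) * ((m:ℝ≥0∞)⁻¹)^(k+1)) := by
          rw [add_zero, Finset.sum_const, Finset.sum_const, Finset.card_powersetCard,
            Nat.card_Ico, Nat.card_Icc, show m + 1 - 1 = m by omega]
          simp [nsmul_eq_mul, mul_assoc]
      _ ≤ (Nat.choose t k : ℝ≥0∞) * ((m:ℝ≥0∞) * ((m:ℝ≥0∞)⁻¹)^(k+1)) := by
          gcongr
          omega
  -- Step 3: bound P(Bad1)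
  have hBad1Bound : P m Bad1 ≤ ((g:ℝ≥0∞))⁻¹ := by
    set VV : Finset (ℕ × ℕ) := (Finset.Icc 1 m) ×ˢ (Finset.Icc 1 m) with hVV
    set val : (Fin (2*H) ↪ ↥VV) → ℕ → ℕ × ℕ := fun e a =>
      if ha : a < 2*H then ((e ⟨a, ha⟩ : ℕ × ℕ)) else (0,0) with hval
    set A : (Fin (2*H) ↪ ↥VV) → Set (Ω m) := fun e =>
      ⋂ j ∈ Finset.Icc 1 (4*H), (X m j)⁻¹'
        {if j % 2 = 1 then (val e ((j-1)/2)).1 else (val e (j/2 - 1)).2} with hA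
    set BadNull : Set (Ω m) := ⋃ i ∈ Finset.range (4*H), (X m (i+1))⁻¹' (↑(Finset.Icc 1 m))ᶜ
      with hBadNull
    have hsub : Bad1 ⊆ BadNull ∪ ⋃ e : Fin (2*H) ↪ ↥VV, A e := by
      intro ω hω
      simp only [hBad1, Set.mem_setOf_eq] at hω
      by_cases hN : ω ∈ BadNull
      · exact Or.inl hN
      right
      have hX : ∀ i, i < 4*H → X m (i+1) ω ∈ Finset.Icc 1 m := by
        intro i hi
        by_contra hc
        exact hN (Set.mem_iUnion₂.mpr ⟨i, Finset.mem_range.mpr hi, by simpa using hc⟩)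
      have hinj : ∀ a b : ℕ, a < b → b < 2*H →
          ¬(X m (2*a+1) ω = X m (2*b+1) ω ∧ X m (2*a+2) ω = X m (2*b+2) ω) := by
        rintro a b hab hb ⟨h1, h2⟩
        have hmem : (2*b+2) ∈ {n | ∃ j, 2 ≤ j ∧ j < n ∧
            X m (n - 1) ω = X m (j - 1) ω ∧ X m n ω = X m j ω} := by
          refine ⟨2*a+2, by omega, by omega, ?_, ?_⟩
          · rw [show 2*b+2-1 = 2*b+1 by omega, show 2*a+2-1 = 2*a+1 by omega]
            exact h1.symm
          · exact h2.symm
        have := Nat.sInf_le hmem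
        rw [← hτ m ω] at this
        omega
      have hpairmem : ∀ a : ℕ, a < 2*H → (X m (2*a+1) ω, X m (2*a+2) ω) ∈ VV := by
        intro a ha
        rw [hVV, Finset.mem_product]
        constructor
        · have := hX (2*a) (by omega)
          simpa using this
        · have := hX (2*a+1) (by omega)
          simpa [show 2*a+1+1 = 2*a+2 by omega] using this
      set ef : Fin (2*H) → ↥VV := fun a =>
        ⟨(X m (2*(a:ℕ)+1) ω, X m (2*(a:ℕ)+2) ω), hpairmem a a.isLt⟩ with hef
      have hefinj : Function.Injective ef := by
        intro a b hab
        by_contra hne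
        have hab' : (X m (2*(a:ℕ)+1) ω, X m (2*(a:ℕ)+2) ω)
            = (X m (2*(b:ℕ)+1) ω, X m (2*(b:ℕ)+2) ω) := by
          have := congrArg Subtype.val hab
          simpa [hef] using this
        have h1 : X m (2*(a:ℕ)+1) ω = X m (2*(b:ℕ)+1) ω := congrArg Prod.fst hab'
        have h2 : X m (2*(a:ℕ)+2) ω = X m (2*(b:ℕ)+2) ω := congrArg Prod.snd hab'
        rcases lt_trichotomy (a:ℕ) (b:ℕ) with hlt | heq | hgt
        · exact hinj a b hlt b.isLt ⟨h1, h2⟩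
        · exact hne (Fin.ext heq)
        · exact hinj b a hgt a.isLt ⟨h1.symm, h2.symm⟩
      refine Set.mem_iUnion.mpr ⟨⟨ef, hefinj⟩, ?_⟩
      simp only [hA, Set.mem_iInter, Set.mem_preimage, Set.mem_singleton_iff]
      intro j hj
      rw [Finset.mem_Icc] at hj
      by_cases hpar : j % 2 = 1
      · rw [if_pos hpar]
        set a := (j-1)/2 with hadef
        have haH : a < 2*H := by omega
        have hj2 : j = 2*a+1 := by omega
        rw [hval]
        simp only [haH, dif_pos]
        show X m j ω = (ef ⟨a, haH⟩ : ℕ × ℕ).1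
        rw [hef, hj2]
      · rw [if_neg hpar]
        set a := j/2 - 1 with hadef
        have haH : a < 2*H := by omega
        have hj2 : j = 2*a+2 := by omega
        rw [hval]
        simp only [haH, dif_pos]
        show X m j ω = (ef ⟨a, haH⟩ : ℕ × ℕ).2
        rw [hef, hj2]
    have hAe : ∀ e : Fin (2*H) ↪ ↥VV, P m (A e) ≤ ((m:ℝ≥0∞)⁻¹)^(4*H) := by
      intro e
      have h1 : ∀ j ∈ Finset.Icc 1 (4*H), 1 ≤ j := by
        intro j hj; rw [Finset.mem_Icc] at hj; omega
      have := keyP (P m) (X m) hm2 (hmeas m) (hunif m hm2) (hindep m hm2)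
        (Finset.Icc 1 (4*H)) h1
        (fun j => if j % 2 = 1 then (val e ((j-1)/2)).1 else (val e (j/2 - 1)).2)
      rwa [Nat.card_Icc, show 4*H + 1 - 1 = 4*H by omega] at this
    have hNull : P m BadNull = 0 := by
      have h1 : P m BadNull ≤ ∑ i ∈ Finset.range (4*H),
          P m ((X m (i+1))⁻¹' (↑(Finset.Icc 1 m))ᶜ) := measure_biUnion_finset_le _ _
      have h2 : ∀ i ∈ Finset.range (4*H),
          P m ((X m (i+1))⁻¹' (↑(Finset.Icc 1 m))ᶜ) = 0 := fun i _ =>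
        nullP (P m) (X m) hm2 (hmeas m) (hunif m hm2) i
      rw [Finset.sum_congr rfl h2, Finset.sum_const, smul_zero] at h1
      exact le_antisymm h1 zero_le
    have hcard : Fintype.card (Fin (2*H) ↪ ↥VV) = Nat.descFactorial (m*m) (2*H) := by
      rw [Fintype.card_embedding_eq, Fintype.card_fin, Fintype.card_coe, hVV,
        Finset.card_product, Nat.card_Icc, show m + 1 - 1 = m by omega]
    calc P m Bad1 ≤ P m BadNull + P m (⋃ e : Fin (2*H) ↪ ↥VV, A e) :=
          le_trans (measure_mono hsub) (measure_union_le _ _)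
      _ ≤ 0 + ∑' e : Fin (2*H) ↪ ↥VV, P m (A e) := by
          rw [hNull]
          gcongr
          exact measure_iUnion_le _
      _ = ∑ e : Fin (2*H) ↪ ↥VV, P m (A e) := by rw [zero_add, tsum_fintype]
      _ ≤ ∑ _e : Fin (2*H) ↪ ↥VV, ((m:ℝ≥0∞)⁻¹)^(4*H) := Finset.sum_le_sum (fun e _ => hAe e)
      _ = (Nat.descFactorial (m*m) (2*H) : ℝ≥0∞) * ((m:ℝ≥0∞)⁻¹)^(4*H) := by
          rw [Finset.sum_const, Finset.card_univ, hcard, nsmul_eq_mul]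
      _ ≤ ((g:ℝ≥0∞))⁻¹ := by
          rw [← ENNReal.inv_pow, ← Nat.cast_pow]
          exact enn_helper _ _ _ (by positivity) (by omega) (partA_nat m g (by omega) hg1 hgm)
  -- Step 4: combine
  calc P m {ω | ε <
      (((Finset.Icc 1 (τ m ω)).sup fun n =>
          ((Finset.Ico 1 n).filter fun j => X m j ω = X m n ω).card : ℕ) : ℝ)
        / Real.sqrt m}
      ≤ P m Bad1 + P m (⋃ n ∈ Finset.Icc 1 t, YBig n) :=
        le_trans (measure_mono hincl) (measure_union_le _ _)
    _ ≤ ((g:ℝ≥0∞))⁻¹ + ∑ n ∈ Finset.Icc 1 t,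
          (Nat.choose t k : ℝ≥0∞) * ((m:ℝ≥0∞) * ((m:ℝ≥0∞)⁻¹)^(k+1)) := by
        exact add_le_add hBad1Bound
          (le_trans (measure_biUnion_finset_le _ _) (Finset.sum_le_sum hYBigBound))
    _ ≤ ((g:ℝ≥0∞))⁻¹ + ((m:ℝ≥0∞))⁻¹ := by
        gcongr
        rw [Finset.sum_const, Nat.card_Icc, show t + 1 - 1 = t by omega, nsmul_eq_mul]
        have hnat : (t * Nat.choose t k * m) * m ≤ m^(k+1) := by
          have := partB_nat m g k (by omega) hg1 hev1 hev2 hev3 (gfun_pow16 m)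
          calc (t * Nat.choose t k * m) * m = 4*(m*g) * Nat.choose (4*(m*g)) k * m * m := by
                rw [htdef, hHdef]
            _ ≤ m^(k+1) := this
        have := enn_helper (t * Nat.choose t k * m) (m^(k+1)) m
          (by positivity) (by omega) hnat
        calc (t:ℝ≥0∞) * ((Nat.choose t k : ℝ≥0∞) * ((m:ℝ≥0∞) * ((m:ℝ≥0∞)⁻¹)^(k+1)))
            = ((t * Nat.choose t k * m : ℕ) : ℝ≥0∞) * (((m^(k+1) : ℕ) : ℝ≥0∞))⁻¹ := by
              push_cast
              rw [← ENNReal.inv_pow]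
              ring
          _ ≤ ((m:ℝ≥0∞))⁻¹ := this
end

section
/- Fix integers m ≥ 1 and k ≥ 2. Let f be chosen uniformly at random from all m^(m^k) functions from [m]^k to [m], let X_1, …, X_k be i.i.d. uniform on [m] independent of f, and define X_{n+k} := f(X_n, …, X_{n+k-1}) for n ≥ 1. Separately, let Y_1, Y_2, … be i.i.d. uniform on [m]. For a sequence Z define W_n(Z) := (Z_n, …, Z_{n+k-1}) and τ(Z) as the minimal integer such that W_{τ-k+1}(Z) = W_{μ-k+1}(Z) for some k ≤ μ < τ. Then the random vector (τ(X), X_1, …, X_{τ(X)}) has exactly the same distribution as (τ(Y), Y_1, …, Y_{τ(Y)}). -/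
open MeasureTheory ProbabilityTheory Filter
open scoped ENNReal NNReal

namespace Stmt11Aux


/-- The set of times at which a length-`k` window repeats an earlier one. -/
def Sset (k : ℕ) {m : ℕ} (z : ℕ → Fin m) : Set ℕ :=
  {n | ∃ j, k ≤ j ∧ j < n ∧ ∀ r < k, z (n - k + 1 + r) = z (j - k + 1 + r)}

def IsStop (k : ℕ) {m : ℕ} (z : ℕ → Fin m) (n : ℕ) : Prop :=
  n ∈ Sset k z ∧ ∀ n' < n, n' ∉ Sset k z

lemma mem_sset_congr {m k : ℕ} {z z' : ℕ → Fin m} {N : ℕ}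
    (hzz : ∀ i, 1 ≤ i → i ≤ N → z i = z' i) {n : ℕ} (hn : n ≤ N) :
    n ∈ Sset k z ↔ n ∈ Sset k z' := by
  have key : ∀ (u v : ℕ → Fin m), (∀ i, 1 ≤ i → i ≤ N → u i = v i) →
      n ∈ Sset k u → n ∈ Sset k v := by
    rintro u v huv ⟨j, hj, hjn, hw⟩
    refine ⟨j, hj, hjn, fun r hr => ?_⟩
    rw [← huv (n - k + 1 + r) (by omega) (by omega),
        ← huv (j - k + 1 + r) (by omega) (by omega)]
    exact hw r hr
  exact ⟨key z z' hzz, key z' z (fun i h1 h2 => (hzz i h1 h2).symm)⟩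

lemma exists_mem_sset {m k : ℕ} (hm : 1 ≤ m) (hk : 1 ≤ k) (z : ℕ → Fin m) :
    ∃ n ∈ Sset k z, n ≤ m ^ k + k := by
  have hcard : Fintype.card (Fin k → Fin m) < Fintype.card (Fin (m ^ k + 1)) := by
    simp [Fintype.card_fun]
  obtain ⟨a, b, hab, hfab⟩ := Fintype.exists_ne_map_eq_of_card_lt
    (fun i : Fin (m ^ k + 1) => fun r : Fin k => z ((i : ℕ) + 1 + (r : ℕ))) hcard
  have key : ∀ (a b : Fin (m ^ k + 1)), (a : ℕ) < (b : ℕ) →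
      ((fun r : Fin k => z ((a : ℕ) + 1 + (r : ℕ))) =
        fun r : Fin k => z ((b : ℕ) + 1 + (r : ℕ))) →
      ∃ n ∈ Sset k z, n ≤ m ^ k + k := by
    intro a b hlt heq
    refine ⟨k + (b : ℕ), ⟨k + (a : ℕ), by omega, by omega, fun r hr => ?_⟩, by
      have := b.2; omega⟩
    have h1 : k + (b : ℕ) - k + 1 + r = (b : ℕ) + 1 + r := by omega
    have h2 : k + (a : ℕ) - k + 1 + r = (a : ℕ) + 1 + r := by omega
    rw [h1, h2]
    exact (congrFun heq ⟨r, hr⟩).symm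
  rcases lt_or_gt_of_ne (fun h : (a : ℕ) = (b : ℕ) => hab (Fin.ext h)) with h | h
  · exact key a b h hfab
  · exact key b a h hfab.symm

lemma isStop_sInf {m k : ℕ} (hm : 1 ≤ m) (hk : 1 ≤ k) (z : ℕ → Fin m) :
    IsStop k z (sInf (Sset k z)) ∧ sInf (Sset k z) ≤ m ^ k + k := by
  obtain ⟨n, hn, hnle⟩ := exists_mem_sset hm hk z
  exact ⟨⟨Nat.sInf_mem ⟨n, hn⟩, fun n' hn' => Nat.notMem_of_lt_sInf hn'⟩,
    le_trans (Nat.sInf_le hn) hnle⟩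

lemma sInf_eq_of_isStop {m k : ℕ} {z : ℕ → Fin m} {n : ℕ} (h : IsStop k z n) :
    sInf (Sset k z) = n :=
  le_antisymm (Nat.sInf_le h.1)
    (not_lt.1 fun hlt => h.2 _ hlt (Nat.sInf_mem ⟨n, h.1⟩))

lemma isStop_congr {m k : ℕ} {z z' : ℕ → Fin m} {n : ℕ}
    (hzz : ∀ i, 1 ≤ i → i ≤ n → z i = z' i) :
    IsStop k z n ↔ IsStop k z' n := by
  unfold IsStop
  rw [mem_sset_congr hzz le_rfl]
  refine and_congr_right fun _ => ?_
  exact forall₂_congr fun n' hn' => not_congr (mem_sset_congr hzz (le_of_lt hn'))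

lemma isStop_lt {m k : ℕ} {z : ℕ → Fin m} {n : ℕ} (h : IsStop k z n) : k < n := by
  obtain ⟨j, hj, hjn, -⟩ := h.1; omega

lemma isStop_win_inj {m k : ℕ} {z : ℕ → Fin m} {n : ℕ} (h : IsStop k z n) :
    Function.Injective (fun j : Fin (n - k) => fun r : Fin k => z ((j : ℕ) + 1 + (r : ℕ))) := by
  have hkn : k < n := isStop_lt h
  have key : ∀ p q : Fin (n - k), (p : ℕ) < (q : ℕ) →
      ((fun r : Fin k => z ((p : ℕ) + 1 + (r : ℕ))) =
        fun r : Fin k => z ((q : ℕ) + 1 + (r : ℕ))) → False := by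
    intro p q hpq heq
    refine h.2 ((q : ℕ) + k) (by have := q.2; omega)
      ⟨(p : ℕ) + k, by omega, by omega, fun r hr => ?_⟩
    have h1 : (q : ℕ) + k - k + 1 + r = (q : ℕ) + 1 + r := by omega
    have h2 : (p : ℕ) + k - k + 1 + r = (p : ℕ) + 1 + r := by omega
    rw [h1, h2]
    exact (congrFun heq ⟨r, hr⟩).symm
  intro p q hpq
  rcases Nat.lt_trichotomy (p : ℕ) (q : ℕ) with hlt | heq | hgt
  · exact absurd hpq (fun hpq => key p q hlt hpq)
  · exact Fin.ext heq
  · exact absurd hpq.symm (fun hpq => key q p hgt hpq)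



lemma prefix_iff {m k : ℕ} {Ω : Type*} (F : Ω → (Fin k → Fin m) → Fin m)
    (X : ℕ → Ω → Fin m)
    (hrec : ∀ n : ℕ, 1 ≤ n → ∀ ω, X (n + k) ω = F ω fun i : Fin k => X (n + (i : ℕ)) ω)
    (n : ℕ) (hk : 1 ≤ k) (hn : k ≤ n) (w : ℕ → Fin m) (ω : Ω) :
    (∀ i, 1 ≤ i → i ≤ n → X i ω = w i) ↔
      ((fun i : Fin k => X ((i : ℕ) + 1) ω) = fun i : Fin k => w ((i : ℕ) + 1)) ∧
        ∀ j < n - k, F ω (fun r : Fin k => w (j + 1 + (r : ℕ))) = w (j + 1 + k) := by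
  constructor
  · intro h
    constructor
    · funext i
      exact h _ (by omega) (by have := i.2; omega)
    · intro j hj
      have h1 : (fun r : Fin k => w (j + 1 + (r : ℕ))) =
          fun r : Fin k => X (j + 1 + (r : ℕ)) ω := by
        funext r
        exact (h _ (by omega) (by have := r.2; omega)).symm
      rw [h1, ← hrec (j + 1) (by omega) ω]
      exact h (j + 1 + k) (by omega) (by omega)
  · rintro ⟨hs, hf⟩ i
    induction i using Nat.strong_induction_on with
    | _ i ih =>
      intro h1 hin
      rcases le_or_gt i k with hik | hik
      · have h2 := congrFun hs ⟨i - 1, by omega⟩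
        simp only at h2
        have h3 : i - 1 + 1 = i := by omega
        rwa [h3] at h2
      · have hi : i = (i - k - 1) + 1 + k := by omega
        set j := i - k - 1 with hj
        have hX := hrec (j + 1) (by omega) ω
        have harg : (fun r : Fin k => X (j + 1 + (r : ℕ)) ω) =
            fun r : Fin k => w (j + 1 + (r : ℕ)) := by
          funext r
          exact ih (j + 1 + (r : ℕ)) (by have := r.2; omega) (by omega)
            (by have := r.2; omega)
        rw [hi, hX, harg]
        exact hf j (by omega)

lemma card_prescribed {α β : Type*} [Fintype α] [DecidableEq α] [Fintype β] [DecidableEq β]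
    {l : ℕ} (a : Fin l → α) (ha : Function.Injective a) (t : Fin l → β) :
    Fintype.card {g : α → β // ∀ j, g (a j) = t j} =
      Fintype.card β ^ (Fintype.card α - l) := by
  classical
  have e : {g : α → β // ∀ j, g (a j) = t j} ≃ ({x : α // x ∉ Set.range a} → β) :=
    { toFun := fun g x => g.1 x.1
      invFun := fun h => ⟨fun x => if hx : x ∈ Set.range a then t hx.choose else h ⟨x, hx⟩, by
        intro j
        have hx : a j ∈ Set.range a := ⟨j, rfl⟩
        dsimp only
        rw [dif_pos hx]
        exact congrArg t (ha hx.choose_spec)⟩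
      left_inv := fun g => Subtype.ext (funext fun x => by
        by_cases hx : x ∈ Set.range a
        · show dite _ _ _ = _
          rw [dif_pos hx, ← g.2 hx.choose, hx.choose_spec]
        · show dite _ _ _ = _
          rw [dif_neg hx])
      right_inv := fun h => funext fun x => by
        show dite _ _ _ = _
        rw [dif_neg x.2] }
  rw [Fintype.card_congr e, Fintype.card_fun]
  congr 1
  have h1 : Fintype.card {x : α // x ∉ Set.range a} =
      Fintype.card α - Fintype.card {x : α // x ∈ Set.range a} :=
    Fintype.card_subtype_compl _
  rw [h1]
  congr 1
  rw [show Fintype.card {x : α // x ∈ Set.range a} = Fintype.card (Set.range a) from rfl]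
  rw [Set.card_range_of_injective ha, Fintype.card_fin]

lemma map_eq_sum_dirac {Ω γ ι : Type*} [MeasurableSpace Ω] [MeasurableSpace γ]
    (P : Measure Ω) (s : Finset ι) (E : ι → Set Ω) (c : ι → γ) (h : Ω → γ)
    (hE : ∀ q ∈ s, MeasurableSet (E q))
    (hdisj : (↑s : Set ι).Pairwise (Function.onFun Disjoint E))
    (hcover : ∀ ω, ∃ q ∈ s, ω ∈ E q)
    (hconst : ∀ q ∈ s, ∀ ω ∈ E q, h ω = c q) :
    Measure.map h P = ∑ q ∈ s, P (E q) • Measure.dirac (c q) := by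
  classical
  have hpre : ∀ t : Set γ, h ⁻¹' t = ⋃ q ∈ s.filter (fun q => c q ∈ t), E q := by
    intro t
    ext ω
    simp only [Set.mem_preimage, Set.mem_iUnion, Finset.mem_filter, exists_prop]
    constructor
    · intro hω
      obtain ⟨q, hq, hωq⟩ := hcover ω
      exact ⟨q, ⟨hq, by rw [← hconst q hq ω hωq]; exact hω⟩, hωq⟩
    · rintro ⟨q, ⟨hq, hc⟩, hωq⟩
      rw [hconst q hq ω hωq]
      exact hc
  have hmeas : Measurable h := by
    intro t _
    rw [hpre]
    exact (s.filter _).measurableSet_biUnion fun q hq => hE q (Finset.mem_filter.mp hq).1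
  ext t ht
  rw [Measure.map_apply hmeas ht, hpre,
    measure_biUnion_finset (hdisj.mono (by simp only [Finset.coe_filter]; exact fun x hx => hx.1))
      (fun q hq => hE q (Finset.mem_filter.mp hq).1)]
  rw [Finset.sum_filter]
  rw [Measure.coe_finset_sum, Finset.sum_apply]
  refine Finset.sum_congr rfl fun q hq => ?_
  rw [Measure.smul_apply, Measure.dirac_apply' _ ht, smul_eq_mul]
  by_cases hc : c q ∈ t
  · simp [hc, Set.indicator_of_mem]
  · simp [hc, Set.indicator_of_notMem]


def extW (m : ℕ) (hm : 1 ≤ m) (q : Σ n : ℕ, Fin n → Fin m) : ℕ → Fin m :=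
  fun i => if h : 1 ≤ i ∧ i ≤ q.1 then q.2 ⟨i - 1, by omega⟩ else ⟨0, hm⟩

def cW (m : ℕ) (hm : 1 ≤ m) (q : Σ n : ℕ, Fin n → Fin m) : ℕ × (ℕ → ℕ) :=
  (q.1, fun i => if 1 ≤ i ∧ i ≤ q.1 then ((extW m hm q i : ℕ) + 1) else 0)

noncomputable def sW (m k : ℕ) (hm : 1 ≤ m) : Finset (Σ n : ℕ, Fin n → Fin m) := by
  classical
  exact ((Finset.range (m ^ k + k + 1)).sigma fun n => (Finset.univ : Finset (Fin n → Fin m))).filter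
    fun q => IsStop k (extW m hm q) q.1

def EW {m : ℕ} {Ω : Type*} (hm : 1 ≤ m) (Z : ℕ → Ω → Fin m)
    (q : Σ n : ℕ, Fin n → Fin m) : Set Ω :=
  ⋂ i ∈ Finset.Icc 1 q.1, (Z i) ⁻¹' {extW m hm q i}

lemma mem_sW {m k : ℕ} (hm : 1 ≤ m) (q : Σ n : ℕ, Fin n → Fin m) :
    q ∈ sW m k hm ↔ q.1 ≤ m ^ k + k ∧ IsStop k (extW m hm q) q.1 := by
  classical
  unfold sW
  rw [Finset.mem_filter, Finset.mem_sigma]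
  simp only [Finset.mem_range, Finset.mem_univ, and_true]
  constructor
  · rintro ⟨h1, h2⟩; exact ⟨by omega, h2⟩
  · rintro ⟨h1, h2⟩; exact ⟨by omega, h2⟩

lemma mem_EW {m : ℕ} {Ω : Type*} (hm : 1 ≤ m) (Z : ℕ → Ω → Fin m)
    (q : Σ n : ℕ, Fin n → Fin m) (ω : Ω) :
    ω ∈ EW hm Z q ↔ ∀ i, 1 ≤ i → i ≤ q.1 → Z i ω = extW m hm q i := by
  simp only [EW, Set.mem_iInter, Finset.mem_Icc, Set.mem_preimage, Set.mem_singleton_iff,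
    and_imp]

lemma extW_apply {m : ℕ} (hm : 1 ≤ m) (q : Σ n : ℕ, Fin n → Fin m) (i : Fin q.1) :
    extW m hm q ((i : ℕ) + 1) = q.2 i := by
  have h : 1 ≤ (i : ℕ) + 1 ∧ (i : ℕ) + 1 ≤ q.1 := ⟨by omega, by have := i.2; omega⟩
  simp only [extW, dif_pos h]
  congr 1

/-- The structural lemma: the law of `(τ, truncated path)` is the sum of point masses on
stopped words, weighted by the probabilities of the corresponding prefix events. -/
lemma map_eq {m k : ℕ} (hm : 1 ≤ m) (hk : 2 ≤ k) {Ω : Type*} [MeasurableSpace Ω]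
    (P : Measure Ω) (Z : ℕ → Ω → Fin m) (hZ : ∀ n, Measurable (Z n)) (τ : Ω → ℕ)
    (hτ : ∀ ω, τ ω = sInf (Sset k (fun i => Z i ω))) :
    Measure.map
        (fun ω => (τ ω, fun i : ℕ => if 1 ≤ i ∧ i ≤ τ ω then ((Z i ω : ℕ) + 1) else 0)) P
      = ∑ q ∈ sW m k hm, P (EW hm Z q) • Measure.dirac (cW m hm q) := by
  classical
  have hτval : ∀ q ∈ sW m k hm, ∀ ω ∈ EW hm Z q, τ ω = q.1 := by
    intro q hq ω hω
    obtain ⟨-, hstop⟩ := (mem_sW hm q).1 hq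
    rw [hτ ω]
    refine sInf_eq_of_isStop ?_
    exact (isStop_congr (fun i h1 h2 => ((mem_EW hm Z q ω).1 hω i h1 h2))).2
      ((isStop_congr (fun _ _ _ => rfl)).1 hstop)
  refine map_eq_sum_dirac P _ _ _ _ ?_ ?_ ?_ ?_
  · intro q _
    exact (Finset.Icc 1 q.1).measurableSet_biInter fun i _ =>
      (hZ i) (measurableSet_singleton _)
  · intro q hq q' hq' hne
    rw [Function.onFun]
    rw [Set.disjoint_left]
    intro ω hω hω'
    apply hne
    have h1 : q.1 = q'.1 := by
      rw [← hτval q hq ω hω, ← hτval q' hq' ω hω']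
    obtain ⟨n, w⟩ := q
    obtain ⟨n', w'⟩ := q'
    simp only at h1
    subst h1
    have h2 : w = w' := by
      funext i
      have e1 := (mem_EW hm Z ⟨n, w⟩ ω).1 hω ((i : ℕ) + 1) (by omega) i.2
      have e2 := (mem_EW hm Z ⟨n, w'⟩ ω).1 hω' ((i : ℕ) + 1) (by omega) i.2
      rw [extW_apply hm ⟨n, w⟩ i] at e1
      rw [extW_apply hm ⟨n, w'⟩ i] at e2
      exact e1.symm.trans e2
    rw [h2]
  · intro ω
    set n := τ ω with hn
    refine ⟨⟨n, fun i => Z ((i : ℕ) + 1) ω⟩, ?_, ?_⟩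
    · rw [mem_sW hm]
      have hstops := isStop_sInf (m := m) (k := k) hm (by omega) (fun i => Z i ω)
      have hτω : IsStop k (fun i => Z i ω) n := by rw [hn, hτ ω]; exact hstops.1
      have hle : n ≤ m ^ k + k := by rw [hn, hτ ω]; exact hstops.2
      refine ⟨hle, ?_⟩
      refine (isStop_congr (z := fun i => Z i ω) ?_).1 hτω
      intro i h1 h2
      have : extW m hm ⟨n, fun i : Fin n => Z ((i : ℕ) + 1) ω⟩ i
          = Z ((i - 1) + 1) ω := by
        simp only [extW, dif_pos (⟨h1, h2⟩ : 1 ≤ i ∧ i ≤ n)]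
      rw [this]
      congr 1
      omega
    · rw [mem_EW hm]
      intro i h1 h2
      have : extW m hm ⟨n, fun i : Fin n => Z ((i : ℕ) + 1) ω⟩ i
          = Z ((i - 1) + 1) ω := by
        simp only [extW, dif_pos (⟨h1, h2⟩ : 1 ≤ i ∧ i ≤ n)]
      rw [this]
      congr 1
      omega
  · intro q hq ω hω
    have hτq := hτval q hq ω hω
    refine Prod.ext ?_ ?_
    · exact hτq
    · funext i
      simp only [cW, hτq]
      by_cases h : 1 ≤ i ∧ i ≤ q.1
      · rw [if_pos h, if_pos h, (mem_EW hm Z q ω).1 hω i h.1 h.2]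
      · rw [if_neg h, if_neg h]

lemma weight_iid {m k : ℕ} (hm : 1 ≤ m) {Ω : Type*} [MeasurableSpace Ω]
    (P : Measure Ω) (Z : ℕ → Ω → Fin m) (hZ : ∀ n, Measurable (Z n))
    (hunif : ∀ n : ℕ, ∀ j : Fin m, Measure.map (Z (n + 1)) P {j} = (m : ℝ≥0∞)⁻¹)
    (hindep : iIndepFun (fun n => Z (n + 1)) P)
    (q : Σ n : ℕ, Fin n → Fin m) :
    P (EW hm Z q) = (m : ℝ≥0∞)⁻¹ ^ q.1 := by
  classical
  have hset : EW hm Z q = ⋂ i ∈ Finset.range q.1, (Z (i + 1)) ⁻¹' {extW m hm q (i + 1)} := by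
    ext ω
    rw [mem_EW]
    simp only [Set.mem_iInter, Finset.mem_range, Set.mem_preimage, Set.mem_singleton_iff]
    constructor
    · intro h i hi
      exact h (i + 1) (by omega) (by omega)
    · intro h i h1 h2
      have h3 : i - 1 + 1 = i := by omega
      rw [← h3]
      exact h (i - 1) (by omega)
  rw [hset, hindep.measure_inter_preimage_eq_mul (Finset.range q.1)
      (sets := fun i => {extW m hm q (i + 1)}) (fun i _ => measurableSet_singleton _)]
  calc ∏ i ∈ Finset.range q.1, P (Z (i + 1) ⁻¹' {extW m hm q (i + 1)})
      = ∏ _i ∈ Finset.range q.1, (m : ℝ≥0∞)⁻¹ := by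
        refine Finset.prod_congr rfl fun i _ => ?_
        rw [← Measure.map_apply (hZ (i + 1)) (measurableSet_singleton _)]
        exact hunif i _
    _ = (m : ℝ≥0∞)⁻¹ ^ q.1 := by rw [Finset.prod_const, Finset.card_range]

lemma weight_X {m k : ℕ} (hm : 1 ≤ m) (hk : 2 ≤ k) {Ω : Type*} [MeasurableSpace Ω]
    (P : Measure Ω) (F : Ω → (Fin k → Fin m) → Fin m) (X : ℕ → Ω → Fin m)
    (hFmeas : Measurable F) (hXmeas : ∀ n, Measurable (X n))
    (hF : ∀ g : (Fin k → Fin m) → Fin m,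
      Measure.map F P {g} = ((m : ℝ≥0∞) ^ (m ^ k))⁻¹)
    (hseed_unif : ∀ i : Fin k, ∀ j : Fin m,
      Measure.map (X ((i : ℕ) + 1)) P {j} = (m : ℝ≥0∞)⁻¹)
    (hseed_indep :
      iIndepFun (fun i : Fin k => X ((i : ℕ) + 1)) P)
    (hseedF : IndepFun (fun ω (i : Fin k) => X ((i : ℕ) + 1) ω) F P)
    (hrec : ∀ n : ℕ, 1 ≤ n → ∀ ω,
      X (n + k) ω = F ω fun i : Fin k => X (n + (i : ℕ)) ω)
    (q : Σ n : ℕ, Fin n → Fin m) (hq : q ∈ sW m k hm) :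
    P (EW hm X q) = (m : ℝ≥0∞)⁻¹ ^ q.1 := by
  classical
  obtain ⟨hqle, hstop⟩ := (mem_sW hm q).1 hq
  set n := q.1 with hn
  set w := extW m hm q with hw
  have hkn : k < n := isStop_lt hstop
  set l := n - k with hl
  set a : Fin l → (Fin k → Fin m) := fun j => fun r => w ((j : ℕ) + 1 + (r : ℕ)) with ha
  have hainj : Function.Injective a := isStop_win_inj hstop
  have hlle : l ≤ m ^ k := by
    have h1 := Fintype.card_le_of_injective a hainj
    simpa [Fintype.card_fun] using h1
  set Bset : Set ((Fin k → Fin m) → Fin m) :=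
    {g | ∀ j < l, g (fun r : Fin k => w (j + 1 + (r : ℕ))) = w (j + 1 + k)} with hB
  have hm0 : (m : ℝ≥0∞) ≠ 0 := Nat.cast_ne_zero.mpr (by omega)
  have hmt : (m : ℝ≥0∞) ≠ ⊤ := ENNReal.natCast_ne_top m
  have hsplit : EW hm X q =
      (fun ω (i : Fin k) => X ((i : ℕ) + 1) ω) ⁻¹' {fun i : Fin k => w ((i : ℕ) + 1)} ∩
        F ⁻¹' Bset := by
    ext ω
    simp only [Set.mem_inter_iff, Set.mem_preimage, Set.mem_singleton_iff, hB,
      Set.mem_setOf_eq]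
    rw [mem_EW]
    exact prefix_iff F X hrec n (by omega) (by omega) w ω
  rw [hsplit, hseedF.measure_inter_preimage_eq_mul _ _ (measurableSet_singleton _)
    MeasurableSet.of_discrete]
  have hseedset : (fun ω (i : Fin k) => X ((i : ℕ) + 1) ω) ⁻¹'
        {fun i : Fin k => w ((i : ℕ) + 1)} =
      ⋂ i ∈ (Finset.univ : Finset (Fin k)), (X ((i : ℕ) + 1)) ⁻¹' {w ((i : ℕ) + 1)} := by
    ext ω
    simp only [Set.mem_preimage, Set.mem_singleton_iff, Set.mem_iInter, Finset.mem_univ,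
      true_implies]
    exact funext_iff
  have hseedval : P ((fun ω (i : Fin k) => X ((i : ℕ) + 1) ω) ⁻¹'
      {fun i : Fin k => w ((i : ℕ) + 1)}) = (m : ℝ≥0∞)⁻¹ ^ k := by
    rw [hseedset, hseed_indep.measure_inter_preimage_eq_mul Finset.univ
      (sets := fun i => {w ((i : ℕ) + 1)}) (fun i _ => measurableSet_singleton _)]
    calc ∏ i ∈ (Finset.univ : Finset (Fin k)), P (X ((i : ℕ) + 1) ⁻¹' {w ((i : ℕ) + 1)})
        = ∏ _i ∈ (Finset.univ : Finset (Fin k)), (m : ℝ≥0∞)⁻¹ := by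
          refine Finset.prod_congr rfl fun i _ => ?_
          rw [← Measure.map_apply (hXmeas ((i : ℕ) + 1)) (measurableSet_singleton _)]
          exact hseed_unif i _
      _ = (m : ℝ≥0∞)⁻¹ ^ k := by
          rw [Finset.prod_const, Finset.card_univ, Fintype.card_fin]
  have hFval : P (F ⁻¹' Bset) = (m : ℝ≥0∞)⁻¹ ^ l := by
    rw [← Measure.map_apply hFmeas MeasurableSet.of_discrete]
    set BF : Finset ((Fin k → Fin m) → Fin m) := Finset.univ.filter (· ∈ Bset) with hBF
    have hBun : Bset = ⋃ g ∈ BF, {g} := by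
      ext g
      simp [hBF]
    have hcard : BF.card = m ^ (m ^ k - l) := by
      have h1 : BF.card = Fintype.card {g : (Fin k → Fin m) → Fin m // g ∈ Bset} :=
        (Fintype.card_subtype _).symm
      have e : {g : (Fin k → Fin m) → Fin m // g ∈ Bset} ≃
          {g : (Fin k → Fin m) → Fin m // ∀ j : Fin l, g (a j) = w ((j : ℕ) + 1 + k)} :=
        Equiv.subtypeEquivRight (by
          intro g
          constructor
          · intro hgB j
            exact hgB (j : ℕ) j.2
          · intro hgB j hj
            exact hgB ⟨j, hj⟩)
      rw [h1, Fintype.card_congr e,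
        card_prescribed a hainj (fun j => w ((j : ℕ) + 1 + k)),
        Fintype.card_fun, Fintype.card_fin, Fintype.card_fin]
    rw [hBun, measure_biUnion_finset
      (fun g _ g' _ hgg' => by simpa [Set.disjoint_singleton] using hgg')
      (fun g _ => measurableSet_singleton g)]
    have hsum : ∑ g ∈ BF, Measure.map F P {g} = BF.card * ((m : ℝ≥0∞) ^ (m ^ k))⁻¹ := by
      rw [Finset.sum_congr rfl (fun g _ => hF g), Finset.sum_const, nsmul_eq_mul]
    rw [hsum, hcard]
    have h2 : ((m ^ (m ^ k - l) : ℕ) : ℝ≥0∞) = (m : ℝ≥0∞) ^ (m ^ k - l) := by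
      push_cast
      ring
    rw [h2]
    have h3 : ((m : ℝ≥0∞) ^ (m ^ k)) = (m : ℝ≥0∞) ^ (m ^ k - l) * (m : ℝ≥0∞) ^ l :=
      (pow_sub_mul_pow _ hlle).symm
    rw [h3, ENNReal.mul_inv (Or.inl (pow_ne_zero _ hm0)) (Or.inl (ENNReal.pow_ne_top hmt)),
      ← mul_assoc, ENNReal.mul_inv_cancel (pow_ne_zero _ hm0) (ENNReal.pow_ne_top hmt),
      one_mul, ENNReal.inv_pow]
  rw [hseedval, hFval, ← pow_add]
  congr 1
  omega

end Stmt11Aux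

/-- Fix `m ≥ 1` and `k ≥ 2`.  In the first model, a function
`f : [m]^k → [m]` is chosen uniformly at random (each of the `m^(m^k)`
functions has probability `m^{-m^k}`), the seeds `X 1, …, X k` are i.i.d.
uniform on `[m]` and independent of `f`, and the sequence is extended by
`X (n+k) = f (X n, …, X (n+k-1))` for `n ≥ 1`.  In the second model,
`Y 1, Y 2, …` are i.i.d. uniform on `[m]`.  With `τ` the first time a
length-`k` window repeats an earlier one, the random vector
`(τ(X), X 1, …, X τ(X))` (encoded as `τ` together with the sequence truncated
to indices `1, …, τ`, reporting values in `{1,…,m}` and `0` outside the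
range) has exactly the same distribution in both models.  Here `[m]` is
encoded as `Fin m`, with `j : Fin m` representing the value `j + 1`. -/
theorem stmt_11
    (m k : ℕ) (hm : 1 ≤ m) (hk : 2 ≤ k)
    {Ω₁ : Type*} [MeasurableSpace Ω₁] (P₁ : Measure Ω₁) [IsProbabilityMeasure P₁]
    {Ω₂ : Type*} [MeasurableSpace Ω₂] (P₂ : Measure Ω₂) [IsProbabilityMeasure P₂]
    (F : Ω₁ → (Fin k → Fin m) → Fin m)
    (X : ℕ → Ω₁ → Fin m) (Y : ℕ → Ω₂ → Fin m)
    (hFmeas : Measurable F)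
    (hXmeas : ∀ n, Measurable (X n))
    (hYmeas : ∀ n, Measurable (Y n))
    -- `f` is uniform over all `m^(m^k)` functions
    (hF : ∀ g : (Fin k → Fin m) → Fin m,
      Measure.map F P₁ {g} = ((m : ℝ≥0∞) ^ (m ^ k))⁻¹)
    -- the seeds `X 1, …, X k` are i.i.d. uniform on `[m]`
    (hseed_unif : ∀ i : Fin k, ∀ j : Fin m,
      Measure.map (X ((i : ℕ) + 1)) P₁ {j} = (m : ℝ≥0∞)⁻¹)
    (hseed_indep :
      iIndepFun (fun i : Fin k => X ((i : ℕ) + 1)) P₁)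
    -- the seed vector is independent of `f`
    (hseedF : IndepFun (fun ω (i : Fin k) => X ((i : ℕ) + 1) ω) F P₁)
    -- the recursion `X (n+k) = f (X n, …, X (n+k-1))` for `n ≥ 1`
    (hrec : ∀ n : ℕ, 1 ≤ n → ∀ ω,
      X (n + k) ω = F ω fun i : Fin k => X (n + (i : ℕ)) ω)
    -- `Y 1, Y 2, …` are i.i.d. uniform on `[m]`
    (hY_unif : ∀ n : ℕ, ∀ j : Fin m,
      Measure.map (Y (n + 1)) P₂ {j} = (m : ℝ≥0∞)⁻¹)
    (hY_indep : iIndepFun (fun n => Y (n + 1)) P₂)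
    (τX : Ω₁ → ℕ) (τY : Ω₂ → ℕ)
    (hτX : ∀ ω, τX ω = sInf {n | ∃ j, k ≤ j ∧ j < n ∧
        ∀ r < k, X (n - k + 1 + r) ω = X (j - k + 1 + r) ω})
    (hτY : ∀ ω, τY ω = sInf {n | ∃ j, k ≤ j ∧ j < n ∧
        ∀ r < k, Y (n - k + 1 + r) ω = Y (j - k + 1 + r) ω}) :
    Measure.map
        (fun ω => (τX ω,
          fun i : ℕ => if 1 ≤ i ∧ i ≤ τX ω then ((X i ω : ℕ) + 1) else 0)) P₁
      = Measure.map
        (fun ω => (τY ω,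
          fun i : ℕ => if 1 ≤ i ∧ i ≤ τY ω then ((Y i ω : ℕ) + 1) else 0)) P₂ := by
  
  have hτX' : ∀ ω, τX ω = sInf (Stmt11Aux.Sset k (fun i => X i ω)) := fun ω => by
    rw [hτX ω]; rfl
  have hτY' : ∀ ω, τY ω = sInf (Stmt11Aux.Sset k (fun i => Y i ω)) := fun ω => by
    rw [hτY ω]; rfl
  rw [Stmt11Aux.map_eq hm hk P₁ X hXmeas τX hτX',
      Stmt11Aux.map_eq hm hk P₂ Y hYmeas τY hτY']
  refine Finset.sum_congr rfl fun q hq => ?_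
  rw [Stmt11Aux.weight_X hm hk P₁ F X hFmeas hXmeas hF hseed_unif hseed_indep hseedF hrec q hq,
      Stmt11Aux.weight_iid (k := k) hm P₂ Y hYmeas hY_unif hY_indep q]
end

section
/- Let m ≥ 1 and k ≥ 2 be integers, let X_1, X_2, … be i.i.d. random variables uniform on [m] := {1,…,m}, and for j ∈ [m] let T_k(j) := #{1 ≤ i ≤ k : X_i = j}. Then E[ C(T_k(1), 2)² ] = C(k,2)/m² + 2(k−2)·C(k,2)/m³ + C(k,2)·C(k−2,2)/m⁴. -/
set_option maxHeartbeats 1000000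


open MeasureTheory ProbabilityTheory Filter
open scoped ENNReal NNReal

private lemma boole_mul_boole {p q : Prop} [Decidable p] [Decidable q] :
    (if p then (1:ℝ) else 0) * (if q then 1 else 0) = if p ∧ q then 1 else 0 := by
  by_cases hp : p <;> by_cases hq : q <;> simp [hp, hq]

private lemma choose_two_succ_succ (n : ℕ) : (n+2).choose 2 = n.choose 2 + 2*n + 1 := by
  simp only [Nat.choose_succ_succ, Nat.choose_one_right, Nat.choose_zero_right,
    show Nat.succ 1 = 2 from rfl]
  omega

/-- For i.i.d. uniforms on `[m]` (`m ≥ 1`, `k ≥ 2`), with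
`T_k(j) = #{1 ≤ i ≤ k : X i = j}`, one has
`E[C(T_k(1),2)²] = C(k,2)/m² + 2(k-2)·C(k,2)/m³ + C(k,2)·C(k-2,2)/m⁴`. -/
theorem stmt_14
    (m k : ℕ) (hm : 1 ≤ m) (hk : 2 ≤ k)
    {Ω : Type*} [MeasurableSpace Ω] (P : Measure Ω) [IsProbabilityMeasure P]
    (X : ℕ → Ω → ℕ)
    (hmeas : ∀ n, Measurable (X (n + 1)))
    (hunif : ∀ n (j : ℕ),
      Measure.map (X (n + 1)) P {j}
        = if j ∈ Finset.Icc 1 m then ((m : ℝ≥0∞))⁻¹ else 0)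
    (hindep : iIndepFun (fun n => X (n + 1)) P)
    :
    ∫ ω, ((((Finset.Icc 1 k).filter fun i => X i ω = 1).card.choose 2 : ℝ)) ^ 2 ∂P
      = (k.choose 2 : ℝ) / (m : ℝ) ^ 2
        + 2 * ((k : ℝ) - 2) * (k.choose 2 : ℝ) / (m : ℝ) ^ 3
        + (k.choose 2 : ℝ) * ((k - 2).choose 2 : ℝ) / (m : ℝ) ^ 4 := by
  classical
  set S : Finset ℕ := Finset.Icc 1 k with hS
  set r : ℝ := (m : ℝ)⁻¹ with hr
  have hm0 : (m : ℝ) ≠ 0 := by positivity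
  have hXmeas : ∀ i : ℕ, 1 ≤ i → Measurable (X i) := by
    intro i hi
    have := hmeas (i - 1)
    rwa [Nat.sub_add_cancel hi] at this
  -- probability of the intersection event
  have hprob : ∀ A : Finset ℕ, (∀ i ∈ A, 1 ≤ i) →
      P (⋂ i ∈ A, X i ⁻¹' {1}) = ((m : ℝ≥0∞))⁻¹ ^ A.card := by
    intro A hA
    have hinj : Set.InjOn (· - 1) (A : Set ℕ) := by
      intro a ha b hb hab
      have h1 := hA a ha
      have h2 := hA b hb
      simp only at hab
      omega
    have hset : (⋂ n ∈ A.image (· - 1), X (n + 1) ⁻¹' {1}) = ⋂ i ∈ A, X i ⁻¹' {1} := by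
      ext ω
      simp only [Set.mem_iInter, Finset.mem_image, Set.mem_preimage, Set.mem_singleton_iff]
      constructor
      · intro h i hi
        have := h (i - 1) ⟨i, hi, rfl⟩
        rwa [Nat.sub_add_cancel (hA i hi)] at this
      · rintro h n ⟨i, hi, rfl⟩
        rw [Nat.sub_add_cancel (hA i hi)]
        exact h i hi
    have hone : (1:ℕ) ∈ Finset.Icc 1 m := by simp [hm]
    have hfac : ∀ n : ℕ, P (X (n + 1) ⁻¹' {1}) = ((m : ℝ≥0∞))⁻¹ := by
      intro n
      have h := hunif n 1
      rwa [Measure.map_apply (hmeas n) (measurableSet_singleton 1), if_pos hone] at h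
    calc P (⋂ i ∈ A, X i ⁻¹' {1})
        = P (⋂ n ∈ A.image (· - 1), X (n + 1) ⁻¹' {1}) := by rw [hset]
      _ = ∏ n ∈ A.image (· - 1), P (X (n + 1) ⁻¹' {1}) :=
          by
            have h := hindep.meas_biInter (S := A.image (· - 1)) (s := fun n => X (n + 1) ⁻¹' {1}) (fun n _ => ⟨{1}, measurableSet_singleton 1, rfl⟩)
            exact h
      _ = ((m : ℝ≥0∞))⁻¹ ^ A.card := by
          rw [Finset.prod_congr rfl (fun n _ => hfac n), Finset.prod_const,
            Finset.card_image_of_injOn hinj]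
  -- integral of the indicator
  have hfun : ∀ A : Finset ℕ, (∀ i ∈ A, 1 ≤ i) →
      (fun ω => if ∀ i ∈ A, X i ω = 1 then (1:ℝ) else 0)
        = Set.indicator (⋂ i ∈ A, X i ⁻¹' {1}) (fun _ => (1:ℝ)) := by
    intro A hA
    ext ω
    by_cases h : ∀ i ∈ A, X i ω = 1
    · rw [if_pos h, Set.indicator_of_mem]
      simp only [Set.mem_iInter, Set.mem_preimage, Set.mem_singleton_iff]
      exact h
    · rw [if_neg h, Set.indicator_of_notMem]
      simp only [Set.mem_iInter, Set.mem_preimage, Set.mem_singleton_iff]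
      exact h
  have hEmeas : ∀ A : Finset ℕ, (∀ i ∈ A, 1 ≤ i) →
      MeasurableSet (⋂ i ∈ A, X i ⁻¹' {1}) := by
    intro A hA
    exact A.measurableSet_biInter fun i hi =>
      (hXmeas i (hA i hi)) (measurableSet_singleton 1)
  have hint : ∀ A : Finset ℕ, (∀ i ∈ A, 1 ≤ i) →
      ∫ ω, (if ∀ i ∈ A, X i ω = 1 then (1:ℝ) else 0) ∂P = r ^ A.card := by
    intro A hA
    rw [show (fun ω => if ∀ i ∈ A, X i ω = 1 then (1:ℝ) else 0)
        = Set.indicator (⋂ i ∈ A, X i ⁻¹' {1}) (fun _ => (1:ℝ)) from hfun A hA]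
    rw [integral_indicator_const (1:ℝ) (hEmeas A hA), measureReal_def, hprob A hA, smul_eq_mul, mul_one,
      ENNReal.toReal_pow, ENNReal.toReal_inv, hr]
    simp
  have hintg : ∀ A : Finset ℕ, (∀ i ∈ A, 1 ≤ i) →
      Integrable (fun ω => if ∀ i ∈ A, X i ω = 1 then (1:ℝ) else 0) P := by
    intro A hA
    rw [hfun A hA]
    exact (integrable_const (1:ℝ)).indicator (hEmeas A hA)
  set P2 := S.powersetCard 2 with hP2
  have hP2mem : ∀ q ∈ P2, q ⊆ S ∧ q.card = 2 := fun q hq => Finset.mem_powersetCard.mp hq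
  have hge1 : ∀ A : Finset ℕ, A ⊆ S → ∀ i ∈ A, 1 ≤ i := by
    intro A hAS i hi
    have := hAS hi
    rw [hS, Finset.mem_Icc] at this
    exact this.1
  -- pointwise representation of the squared choose
  have hrep : ∀ ω, ((((S.filter fun i => X i ω = 1)).card.choose 2 : ℝ)) ^ 2
      = ∑ q ∈ P2, ∑ q' ∈ P2, (if ∀ i ∈ q ∪ q', X i ω = 1 then (1:ℝ) else 0) := by
    intro ω
    have h2 : (((S.filter fun i => X i ω = 1)).card.choose 2 : ℝ)
        = ∑ q ∈ P2, (if ∀ i ∈ q, X i ω = 1 then (1:ℝ) else 0) := by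
      rw [Finset.sum_boole]
      norm_cast
      rw [← Finset.card_powersetCard]
      congr 1
      ext q
      simp only [Finset.mem_powersetCard, Finset.mem_filter, Finset.subset_iff,
        Finset.mem_filter, hP2]
      exact ⟨fun ⟨h1, h2⟩ => ⟨⟨fun x hx => (h1 hx).1, h2⟩, fun i hi => (h1 hi).2⟩,
        fun ⟨⟨h1, h2⟩, h3⟩ => ⟨fun x hx => ⟨h1 hx, h3 x hx⟩, h2⟩⟩
    rw [h2, sq, Finset.sum_mul_sum]
    refine Finset.sum_congr rfl fun q hq => Finset.sum_congr rfl fun q' hq' => ?_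
    rw [boole_mul_boole]
    exact if_congr (Iff.symm Finset.forall_mem_union) rfl rfl
  have hintrw : ∫ ω, ((((S.filter fun i => X i ω = 1)).card.choose 2 : ℝ)) ^ 2 ∂P
      = ∑ q ∈ P2, ∑ q' ∈ P2, r ^ (q ∪ q').card := by
    have : ∫ ω, ((((S.filter fun i => X i ω = 1)).card.choose 2 : ℝ)) ^ 2 ∂P
        = ∫ ω, ∑ q ∈ P2, ∑ q' ∈ P2,
            (if ∀ i ∈ q ∪ q', X i ω = 1 then (1:ℝ) else 0) ∂P := by
      exact integral_congr_ae (Filter.Eventually.of_forall hrep)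
    rw [this, integral_finset_sum _ (fun q hq => integrable_finset_sum _
      (fun q' hq' => hintg _ (hge1 _ (Finset.union_subset (hP2mem q hq).1 (hP2mem q' hq').1))))]
    refine Finset.sum_congr rfl fun q hq => ?_
    rw [integral_finset_sum _ (fun q' hq' => hintg _
      (hge1 _ (Finset.union_subset (hP2mem q hq).1 (hP2mem q' hq').1)))]
    exact Finset.sum_congr rfl fun q' hq' =>
      hint _ (hge1 _ (Finset.union_subset (hP2mem q hq).1 (hP2mem q' hq').1))
  have hcardS : S.card = k := by rw [hS, Nat.card_Icc]; omega
  have hcP2 : P2.card = k.choose 2 := by rw [hP2, Finset.card_powersetCard, hcardS]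
  -- the combinatorial inner sum
  have hcomb : ∀ q ∈ P2, ∑ q' ∈ P2, r ^ (q ∪ q').card
      = r^2 + (2*(k-2) : ℕ) * r^3 + ((k-2).choose 2 : ℕ) * r^4 := by
    intro q hq
    obtain ⟨hqS, hq2⟩ := hP2mem q hq
    have hmap : ∀ q' ∈ P2, (q ∩ q').card ∈ Finset.range 3 := by
      intro q' _
      have h := Finset.card_le_card (Finset.inter_subset_left : q ∩ q' ⊆ q)
      rw [Finset.mem_range]
      omega
    have hfib2 : P2.filter (fun q' => (q ∩ q').card = 2) = {q} := by
      ext q'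
      simp only [Finset.mem_filter, Finset.mem_singleton]
      constructor
      · rintro ⟨hq'P, h2⟩
        obtain ⟨hq'S, hq'2⟩ := hP2mem q' hq'P
        have e1 : q ∩ q' = q' :=
          Finset.eq_of_subset_of_card_le Finset.inter_subset_right (by omega)
        have e2 : q ∩ q' = q :=
          Finset.eq_of_subset_of_card_le Finset.inter_subset_left (by omega)
        rw [← e1]; exact e2
      · rintro rfl
        exact ⟨hq, by rw [Finset.inter_self]; exact hq2⟩
    have hfib0 : P2.filter (fun q' => (q ∩ q').card = 0) = (S \ q).powersetCard 2 := by
      ext q'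
      simp only [Finset.mem_filter, Finset.mem_powersetCard, Finset.card_eq_zero, hP2,
        Finset.mem_powersetCard, Finset.subset_sdiff]
      constructor
      · rintro ⟨⟨hq'S, hq'2⟩, hint0⟩
        refine ⟨⟨hq'S, ?_⟩, hq'2⟩
        rw [Finset.disjoint_iff_inter_eq_empty, Finset.inter_comm]
        exact hint0
      · rintro ⟨⟨hq'S, hdisj⟩, hq'2⟩
        refine ⟨⟨hq'S, hq'2⟩, ?_⟩
        rw [← Finset.inter_comm q', ← Finset.disjoint_iff_inter_eq_empty]
        exact hdisj
    have hcard0 : ((S \ q).powersetCard 2).card = (k-2).choose 2 := by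
      rw [Finset.card_powersetCard, Finset.card_sdiff_of_subset hqS, hcardS, hq2]
    have hfibsum : ∑ j ∈ Finset.range 3,
        (P2.filter (fun q' => (q ∩ q').card = j)).card = P2.card :=
      (Finset.card_eq_sum_card_fiberwise hmap).symm
    have hfib1 : (P2.filter (fun q' => (q ∩ q').card = 1)).card = 2*(k-2) := by
      rw [Finset.sum_range_succ, Finset.sum_range_succ, Finset.sum_range_one,
        hfib0, hfib2, hcard0, hcP2, Finset.card_singleton] at hfibsum
      obtain ⟨n, rfl⟩ : ∃ n, k = n + 2 := ⟨k - 2, by omega⟩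
      rw [choose_two_succ_succ] at hfibsum
      simp only [Nat.add_sub_cancel] at hfibsum ⊢
      omega
    rw [← Finset.sum_fiberwise_of_maps_to hmap (fun q' => r ^ (q ∪ q').card)]
    have hval : ∀ j : ℕ, ∑ q' ∈ P2.filter (fun q' => (q ∩ q').card = j),
        r ^ (q ∪ q').card
        = ((P2.filter (fun q' => (q ∩ q').card = j)).card : ℝ) * r ^ (4 - j) := by
      intro j
      rw [Finset.sum_congr rfl (fun q' hq' => ?_), Finset.sum_const, nsmul_eq_mul]
      obtain ⟨hq'P, hj⟩ := Finset.mem_filter.mp hq'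
      obtain ⟨hq'S, hq'2⟩ := hP2mem q' hq'P
      have hu := Finset.card_union_add_card_inter q q'
      have : (q ∪ q').card = 4 - j := by omega
      rw [this]
    rw [Finset.sum_range_succ, Finset.sum_range_succ, Finset.sum_range_one,
      hval 0, hval 1, hval 2, hfib0, hfib2, hfib1, hcard0, Finset.card_singleton]
    push_cast
    ring

  rw [hintrw, Finset.sum_congr rfl hcomb, Finset.sum_const, hcP2, nsmul_eq_mul]
  have hk2 : ((k - 2 : ℕ) : ℝ) = (k : ℝ) - 2 := by
    push_cast [Nat.cast_sub hk]
    ring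
  push_cast [hk2]
  rw [hr]
  field_simp
end

section
/- Let m ≥ 2 and k ≥ 0 be integers, let X_1, X_2, … be i.i.d. random variables uniform on [m] := {1,…,m}, for j ∈ [m] let T_k(j) := #{1 ≤ i ≤ k : X_i = j}, and let H(k) := (1/m) Σ_{j=1}^m C(T_k(j), 2). Then Var(H(k)) = C(k,2)/m³ − C(k,2)/m⁴; equivalently, Var(H(k)) / (E[H(k)])² = (m−1)/C(k,2) whenever k ≥ 2. -/
open MeasureTheory ProbabilityTheory Filter
open scoped ENNReal NNReal

set_option linter.unusedSectionVars false
set_option linter.unusedVariables false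
section helpers
variable {Ω : Type*} [MeasurableSpace Ω] (P : Measure Ω) [IsProbabilityMeasure P]
  (m : ℕ) (X : ℕ → Ω → ℕ)

lemma measX (hmeas : ∀ n, Measurable (X (n + 1))) {i : ℕ} (hi : 1 ≤ i) :
    Measurable (X i) := by
  have := hmeas (i - 1); rwa [Nat.sub_add_cancel hi] at this

lemma pX (hmeas : ∀ n, Measurable (X (n + 1)))
    (hunif : ∀ n (j : ℕ), Measure.map (X (n + 1)) P {j}
      = if j ∈ Finset.Icc 1 m then ((m : ℝ≥0∞))⁻¹ else 0)
    {i : ℕ} (hi : 1 ≤ i) (v : ℕ) :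
    P {ω | X i ω = v} = if v ∈ Finset.Icc 1 m then ((m : ℝ≥0∞))⁻¹ else 0 := by
  obtain ⟨n, rfl⟩ : ∃ n, i = n + 1 := ⟨i - 1, (Nat.sub_add_cancel hi).symm⟩
  have h := hunif n v
  rwa [Measure.map_apply (hmeas n) (measurableSet_singleton v)] at h

lemma meas_inter (hmeas : ∀ n, Measurable (X (n + 1)))
    (hindep : iIndepFun (fun n => X (n + 1)) P)
    (s : Finset ℕ) (hs : ∀ i ∈ s, 1 ≤ i) (c : ℕ → ℕ) :
    P (⋂ i ∈ s, {ω | X i ω = c i}) = ∏ i ∈ s, P {ω | X i ω = c i} := by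
  have hinj : Set.InjOn (· - 1) ↑s := by
    intro a ha b hb hab
    have ha1 := hs a ha; have hb1 := hs b hb
    dsimp at hab; omega
  have key := (iIndepFun_iff_measure_inter_preimage_eq_mul.mp hindep)
    (s.image (· - 1)) (sets := fun n => {c (n + 1)})
    (fun i _ => measurableSet_singleton _)
  have hset : (⋂ n ∈ s.image (· - 1), X (n + 1) ⁻¹' {c (n + 1)})
      = ⋂ i ∈ s, {ω | X i ω = c i} := by
    ext ω
    simp only [Set.mem_iInter, Finset.mem_image, Set.mem_preimage,
      Set.mem_singleton_iff, Set.mem_setOf_eq]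
    constructor
    · intro h i hi
      have := h (i - 1) ⟨i, hi, rfl⟩
      rwa [Nat.sub_add_cancel (hs i hi)] at this
    · rintro h n ⟨i, hi, rfl⟩
      rw [Nat.sub_add_cancel (hs i hi)]
      exact h i hi
  have hprod : (∏ n ∈ s.image (· - 1), P (X (n + 1) ⁻¹' {c (n + 1)}))
      = ∏ i ∈ s, P {ω | X i ω = c i} := by
    rw [Finset.prod_image (fun a ha b hb => hinj ha hb)]
    refine Finset.prod_congr rfl fun i hi => ?_
    rw [Nat.sub_add_cancel (hs i hi)]
    rfl
  rw [← hset, key, hprod]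

end helpers

section helpers2
variable (m : ℕ)

lemma tsum_pow2 (hm : 2 ≤ m) :
    (∑' v : ℕ, (if v ∈ Finset.Icc 1 m then ((m : ℝ≥0∞))⁻¹ else 0)
      * (if v ∈ Finset.Icc 1 m then ((m : ℝ≥0∞))⁻¹ else 0)) = ((m : ℝ≥0∞))⁻¹ := by
  have hm0 : (m : ℝ≥0∞) ≠ 0 := by simp; omega
  rw [tsum_eq_sum (s := Finset.Icc 1 m) (by intro b hb; simp [hb])]
  have h : ∀ v ∈ Finset.Icc 1 m,
      (if v ∈ Finset.Icc 1 m then ((m : ℝ≥0∞))⁻¹ else 0)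
      * (if v ∈ Finset.Icc 1 m then ((m : ℝ≥0∞))⁻¹ else 0)
      = ((m : ℝ≥0∞))⁻¹ * ((m : ℝ≥0∞))⁻¹ := fun v hv => by simp [hv]
  rw [Finset.sum_congr rfl h]
  simp only [Finset.sum_const, Nat.card_Icc, Nat.add_sub_cancel, nsmul_eq_mul]
  rw [← mul_assoc, ENNReal.mul_inv_cancel hm0 (by simp), one_mul]

lemma tsum_pow3 (hm : 2 ≤ m) :
    (∑' v : ℕ, (if v ∈ Finset.Icc 1 m then ((m : ℝ≥0∞))⁻¹ else 0)
      * ((if v ∈ Finset.Icc 1 m then ((m : ℝ≥0∞))⁻¹ else 0)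
      * (if v ∈ Finset.Icc 1 m then ((m : ℝ≥0∞))⁻¹ else 0)))
      = ((m : ℝ≥0∞))⁻¹ * ((m : ℝ≥0∞))⁻¹ := by
  have hm0 : (m : ℝ≥0∞) ≠ 0 := by simp; omega
  rw [tsum_eq_sum (s := Finset.Icc 1 m) (by intro b hb; simp [hb])]
  have h : ∀ v ∈ Finset.Icc 1 m,
      (if v ∈ Finset.Icc 1 m then ((m : ℝ≥0∞))⁻¹ else 0)
      * ((if v ∈ Finset.Icc 1 m then ((m : ℝ≥0∞))⁻¹ else 0)
      * (if v ∈ Finset.Icc 1 m then ((m : ℝ≥0∞))⁻¹ else 0))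
      = ((m : ℝ≥0∞))⁻¹ * (((m : ℝ≥0∞))⁻¹ * ((m : ℝ≥0∞))⁻¹) := fun v hv => by simp [hv]
  rw [Finset.sum_congr rfl h]
  simp only [Finset.sum_const, Nat.card_Icc, Nat.add_sub_cancel, nsmul_eq_mul]
  rw [← mul_assoc, ENNReal.mul_inv_cancel hm0 (by simp), one_mul]

end helpers2

section helpers3
variable {Ω : Type*} [MeasurableSpace Ω] (P : Measure Ω) [IsProbabilityMeasure P]
  (m : ℕ) (X : ℕ → Ω → ℕ)

variable (hm : 2 ≤ m) (hmeas : ∀ n, Measurable (X (n + 1)))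
    (hunif : ∀ n (j : ℕ), Measure.map (X (n + 1)) P {j}
      = if j ∈ Finset.Icc 1 m then ((m : ℝ≥0∞))⁻¹ else 0)
    (hindep : iIndepFun (fun n => X (n + 1)) P)

include hm hmeas hunif hindep

lemma probE1 {i j : ℕ} (hi : 1 ≤ i) (hj : 1 ≤ j) (hij : i ≠ j) :
    P {ω | X i ω = X j ω} = ((m : ℝ≥0∞))⁻¹ := by
  have hdecomp : {ω | X i ω = X j ω}
      = ⋃ v : ℕ, ({ω | X i ω = v} ∩ {ω | X j ω = v}) := by
    ext ω
    simp only [Set.mem_setOf_eq, Set.mem_iUnion, Set.mem_inter_iff]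
    exact ⟨fun h => ⟨X j ω, h, rfl⟩, fun ⟨v, h1, h2⟩ => h1.trans h2.symm⟩
  have hmi := measX X hmeas hi
  have hmj := measX X hmeas hj
  rw [hdecomp, measure_iUnion]
  · have hterm : ∀ v : ℕ, P ({ω | X i ω = v} ∩ {ω | X j ω = v})
        = (if v ∈ Finset.Icc 1 m then ((m : ℝ≥0∞))⁻¹ else 0)
        * (if v ∈ Finset.Icc 1 m then ((m : ℝ≥0∞))⁻¹ else 0) := by
      intro v
      have hset : {ω | X i ω = v} ∩ {ω | X j ω = v}
          = ⋂ t ∈ ({i, j} : Finset ℕ), {ω | X t ω = (fun _ => v) t} := by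
        ext ω; simp [Set.mem_iInter]
      rw [hset, meas_inter P X hmeas hindep _
        (by intro t ht; simp at ht; rcases ht with rfl | rfl <;> assumption) _,
        Finset.prod_pair hij, pX P m X hmeas hunif hi, pX P m X hmeas hunif hj]
    rw [tsum_congr hterm, tsum_pow2 m hm]
  · intro v w hvw
    refine Set.disjoint_left.mpr fun ω hv hw => hvw ?_
    exact hv.1.symm.trans hw.1
  · intro v
    exact ((hmi (measurableSet_singleton v)).inter (hmj (measurableSet_singleton v)))

lemma probE2 {i j b : ℕ} (hi : 1 ≤ i) (hj : 1 ≤ j) (hb : 1 ≤ b)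
    (hij : i ≠ j) (hjb : j ≠ b) (hib : i ≠ b) :
    P ({ω | X i ω = X j ω} ∩ {ω | X j ω = X b ω})
      = ((m : ℝ≥0∞))⁻¹ * ((m : ℝ≥0∞))⁻¹ := by
  have hmi := measX X hmeas hi
  have hmj := measX X hmeas hj
  have hmb := measX X hmeas hb
  have hdecomp : {ω | X i ω = X j ω} ∩ {ω | X j ω = X b ω}
      = ⋃ v : ℕ, ({ω | X i ω = v} ∩ ({ω | X j ω = v} ∩ {ω | X b ω = v})) := by
    ext ω
    simp only [Set.mem_setOf_eq, Set.mem_iUnion, Set.mem_inter_iff]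
    constructor
    · rintro ⟨h1, h2⟩; exact ⟨X j ω, h1, rfl, h2.symm⟩
    · rintro ⟨v, h1, h2, h3⟩; exact ⟨h1.trans h2.symm, h2.trans h3.symm⟩
  rw [hdecomp, measure_iUnion]
  · have hterm : ∀ v : ℕ, P ({ω | X i ω = v} ∩ ({ω | X j ω = v} ∩ {ω | X b ω = v}))
        = (if v ∈ Finset.Icc 1 m then ((m : ℝ≥0∞))⁻¹ else 0)
        * ((if v ∈ Finset.Icc 1 m then ((m : ℝ≥0∞))⁻¹ else 0)
        * (if v ∈ Finset.Icc 1 m then ((m : ℝ≥0∞))⁻¹ else 0)) := by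
      intro v
      have hset : {ω | X i ω = v} ∩ ({ω | X j ω = v} ∩ {ω | X b ω = v})
          = ⋂ t ∈ ({i, j, b} : Finset ℕ), {ω | X t ω = (fun _ => v) t} := by
        ext ω; simp [Set.mem_iInter]
      rw [hset, meas_inter P X hmeas hindep _
        (by intro t ht; simp at ht; rcases ht with rfl | rfl | rfl <;> assumption) _]
      rw [Finset.prod_insert (by simp [hij, hib]),
        Finset.prod_pair hjb,
        pX P m X hmeas hunif hi, pX P m X hmeas hunif hj, pX P m X hmeas hunif hb]
    rw [tsum_congr hterm, tsum_pow3 m hm]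
  · intro v w hvw
    refine Set.disjoint_left.mpr fun ω hv hw => hvw ?_
    exact hv.1.symm.trans hw.1
  · intro v
    exact (hmi (measurableSet_singleton v)).inter
      ((hmj (measurableSet_singleton v)).inter (hmb (measurableSet_singleton v)))

end helpers3

section helpers4
variable {Ω : Type*} [MeasurableSpace Ω] (P : Measure Ω) [IsProbabilityMeasure P]
  (m : ℕ) (X : ℕ → Ω → ℕ)

variable (hm : 2 ≤ m) (hmeas : ∀ n, Measurable (X (n + 1)))
    (hunif : ∀ n (j : ℕ), Measure.map (X (n + 1)) P {j}
      = if j ∈ Finset.Icc 1 m then ((m : ℝ≥0∞))⁻¹ else 0)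
    (hindep : iIndepFun (fun n => X (n + 1)) P)

include hm hmeas hunif hindep

lemma probE3 {i j a b : ℕ} (hi : 1 ≤ i) (hj : 1 ≤ j) (ha : 1 ≤ a) (hb : 1 ≤ b)
    (hij : i ≠ j) (hab : a ≠ b) (hia : i ≠ a) (hib : i ≠ b) (hja : j ≠ a) (hjb : j ≠ b) :
    P ({ω | X i ω = X j ω} ∩ {ω | X a ω = X b ω})
      = ((m : ℝ≥0∞))⁻¹ * ((m : ℝ≥0∞))⁻¹ := by
  have hmi := measX X hmeas hi
  have hmj := measX X hmeas hj
  have hma := measX X hmeas ha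
  have hmb := measX X hmeas hb
  have hdecomp : {ω | X i ω = X j ω} ∩ {ω | X a ω = X b ω}
      = ⋃ p : ℕ × ℕ, (({ω | X i ω = p.1} ∩ {ω | X j ω = p.1})
          ∩ ({ω | X a ω = p.2} ∩ {ω | X b ω = p.2})) := by
    ext ω
    simp only [Set.mem_setOf_eq, Set.mem_iUnion, Set.mem_inter_iff]
    constructor
    · rintro ⟨h1, h2⟩; exact ⟨(X j ω, X b ω), ⟨h1, rfl⟩, h2, rfl⟩
    · rintro ⟨p, ⟨h1, h2⟩, h3, h4⟩; exact ⟨h1.trans h2.symm, h3.trans h4.symm⟩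
  rw [hdecomp, measure_iUnion]
  · have hterm : ∀ p : ℕ × ℕ,
        P (({ω | X i ω = p.1} ∩ {ω | X j ω = p.1})
          ∩ ({ω | X a ω = p.2} ∩ {ω | X b ω = p.2}))
        = ((if p.1 ∈ Finset.Icc 1 m then ((m : ℝ≥0∞))⁻¹ else 0)
          * (if p.1 ∈ Finset.Icc 1 m then ((m : ℝ≥0∞))⁻¹ else 0))
        * ((if p.2 ∈ Finset.Icc 1 m then ((m : ℝ≥0∞))⁻¹ else 0)
          * (if p.2 ∈ Finset.Icc 1 m then ((m : ℝ≥0∞))⁻¹ else 0)) := by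
      rintro ⟨v, w⟩
      set c : ℕ → ℕ := fun t => if t = i ∨ t = j then v else w with hc
      have hset : ({ω | X i ω = v} ∩ {ω | X j ω = v})
          ∩ ({ω | X a ω = w} ∩ {ω | X b ω = w})
          = ⋂ t ∈ ({i, j, a, b} : Finset ℕ), {ω | X t ω = c t} := by
        have hci : c i = v := by simp [hc]
        have hcj : c j = v := by simp [hc]
        have hca : c a = w := by simp [hc, hia.symm, hja.symm]
        have hcb : c b = w := by simp [hc, hib.symm, hjb.symm]
        ext ω
        simp only [Set.mem_inter_iff, Set.mem_setOf_eq, Set.mem_iInter,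
          Finset.mem_insert, Finset.mem_singleton]
        constructor
        · rintro ⟨⟨h1, h2⟩, h3, h4⟩ t ht
          rcases ht with rfl | rfl | rfl | rfl
          · rwa [hci]
          · rwa [hcj]
          · rwa [hca]
          · rwa [hcb]
        · intro h
          refine ⟨⟨?_, ?_⟩, ?_, ?_⟩
          · rw [← hci]; exact h i (by tauto)
          · rw [← hcj]; exact h j (by tauto)
          · rw [← hca]; exact h a (by tauto)
          · rw [← hcb]; exact h b (by tauto)
      rw [hset, meas_inter P X hmeas hindep _
        (by intro t ht; simp at ht; rcases ht with rfl | rfl | rfl | rfl <;> assumption) _]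
      rw [Finset.prod_insert (by simp [hij, hia, hib]),
        Finset.prod_insert (by simp [hja, hjb]),
        Finset.prod_pair hab,
        pX P m X hmeas hunif hi, pX P m X hmeas hunif hj,
        pX P m X hmeas hunif ha, pX P m X hmeas hunif hb]
      have hci : c i = v := by simp [hc]
      have hcj : c j = v := by simp [hc]
      have hca : c a = w := by simp [hc, hia.symm, hja.symm]
      have hcb : c b = w := by simp [hc, hib.symm, hjb.symm]
      rw [hci, hcj, hca, hcb]; ring
    rw [tsum_congr hterm, ENNReal.tsum_prod
      (f := fun v w => ((if v ∈ Finset.Icc 1 m then ((m : ℝ≥0∞))⁻¹ else 0)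
          * (if v ∈ Finset.Icc 1 m then ((m : ℝ≥0∞))⁻¹ else 0))
        * ((if w ∈ Finset.Icc 1 m then ((m : ℝ≥0∞))⁻¹ else 0)
          * (if w ∈ Finset.Icc 1 m then ((m : ℝ≥0∞))⁻¹ else 0)))]
    have h1 : ∀ v : ℕ, (∑' w : ℕ,
        ((if v ∈ Finset.Icc 1 m then ((m : ℝ≥0∞))⁻¹ else 0)
          * (if v ∈ Finset.Icc 1 m then ((m : ℝ≥0∞))⁻¹ else 0))
        * ((if w ∈ Finset.Icc 1 m then ((m : ℝ≥0∞))⁻¹ else 0)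
          * (if w ∈ Finset.Icc 1 m then ((m : ℝ≥0∞))⁻¹ else 0)))
        = ((if v ∈ Finset.Icc 1 m then ((m : ℝ≥0∞))⁻¹ else 0)
          * (if v ∈ Finset.Icc 1 m then ((m : ℝ≥0∞))⁻¹ else 0)) * ((m : ℝ≥0∞))⁻¹ := by
      intro v
      rw [ENNReal.tsum_mul_left, tsum_pow2 m hm]
    rw [tsum_congr h1, ENNReal.tsum_mul_right, tsum_pow2 m hm]
  · rintro ⟨v, w⟩ ⟨v', w'⟩ hne
    refine Set.disjoint_left.mpr fun ω hvw hvw' => hne ?_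
    have h1 : v = v' := hvw.1.1.symm.trans hvw'.1.1
    have h2 : w = w' := hvw.2.1.symm.trans hvw'.2.1
    simp [h1, h2]
  · rintro ⟨v, w⟩
    exact ((hmi (measurableSet_singleton v)).inter (hmj (measurableSet_singleton v))).inter
      ((hma (measurableSet_singleton w)).inter (hmb (measurableSet_singleton w)))

end helpers4

section helpers5
variable {Ω : Type*} [MeasurableSpace Ω] (P : Measure Ω) [IsProbabilityMeasure P]
  (m : ℕ) (X : ℕ → Ω → ℕ)

lemma Asymm (u v : ℕ) : {ω | X u ω = X v ω} = {ω | X v ω = X u ω} :=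
  Set.ext fun _ => eq_comm

lemma variance_congr' {f g : Ω → ℝ} (h : f =ᵐ[P] g) :
    variance f P = variance g P := by
  have hi : ∫ x, f x ∂P = ∫ x, g x ∂P := integral_congr_ae h
  unfold variance evariance
  congr 1
  apply lintegral_congr_ae
  filter_upwards [h] with ω hω
  rw [hω, hi]


variable (hm : 2 ≤ m) (hmeas : ∀ n, Measurable (X (n + 1)))
    (hunif : ∀ n (j : ℕ), Measure.map (X (n + 1)) P {j}
      = if j ∈ Finset.Icc 1 m then ((m : ℝ≥0∞))⁻¹ else 0)
    (hindep : iIndepFun (fun n => X (n + 1)) P)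

include hm hmeas hunif hindep

lemma probKey {i j a b : ℕ} (hi : 1 ≤ i) (hj : 1 ≤ j) (ha : 1 ≤ a) (hb : 1 ≤ b)
    (hij : i ≠ j) (hab : a ≠ b)
    (hne1 : ¬(a = i ∧ b = j)) (hne2 : ¬(a = j ∧ b = i)) :
    P ({ω | X i ω = X j ω} ∩ {ω | X a ω = X b ω})
      = ((m : ℝ≥0∞))⁻¹ * ((m : ℝ≥0∞))⁻¹ := by
  by_cases hia : i = a
  · subst hia
    have hbj : b ≠ j := fun h => hne1 ⟨rfl, h⟩
    rw [Asymm X i j]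
    exact probE2 P m X hm hmeas hunif hindep hj hi hb hij.symm hab hbj.symm
  by_cases hib : i = b
  · subst hib
    have hja : j ≠ a := fun h => hne2 ⟨h.symm, rfl⟩
    rw [Asymm X i j, Asymm X a i]
    exact probE2 P m X hm hmeas hunif hindep hj hi ha hij.symm (fun h => hia h)
      (fun h => hja h)
  by_cases hja : j = a
  · subst hja
    have hibb : i ≠ b := fun h => hne2 ⟨rfl, h.symm⟩
    exact probE2 P m X hm hmeas hunif hindep hi hj hb hij hab hibb
  by_cases hjb : j = b
  · subst hjb
    rw [Asymm X a j]
    exact probE2 P m X hm hmeas hunif hindep hi hj ha hij hja hia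
  · exact probE3 P m X hm hmeas hunif hindep hi hj ha hb hij hab hia hib
      (fun h => hja h) (fun h => hjb h)

end helpers5

/-- For i.i.d. uniforms on `[m]` (`m ≥ 2`, `k ≥ 0`), with
`T_k(j) = #{1 ≤ i ≤ k : X i = j}` and
`H(k) = (1/m) ∑_{j=1}^m C(T_k(j), 2)`, one has
`Var(H(k)) = C(k,2)/m³ - C(k,2)/m⁴`; equivalently, for `k ≥ 2`,
`Var(H(k)) / (E[H(k)])² = (m-1)/C(k,2)`. -/
theorem stmt_15
    (m k : ℕ) (hm : 2 ≤ m)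
    {Ω : Type*} [MeasurableSpace Ω] (P : Measure Ω) [IsProbabilityMeasure P]
    (X : ℕ → Ω → ℕ)
    (hmeas : ∀ n, Measurable (X (n + 1)))
    (hunif : ∀ n (j : ℕ),
      Measure.map (X (n + 1)) P {j}
        = if j ∈ Finset.Icc 1 m then ((m : ℝ≥0∞))⁻¹ else 0)
    (hindep : iIndepFun (fun n => X (n + 1)) P)
    :
    variance
        (fun ω => (m : ℝ)⁻¹ * ∑ j ∈ Finset.Icc 1 m,
          ((((Finset.Icc 1 k).filter fun i => X i ω = j).card.choose 2 : ℕ) : ℝ)) P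
      = (k.choose 2 : ℝ) / (m : ℝ) ^ 3 - (k.choose 2 : ℝ) / (m : ℝ) ^ 4
    ∧ (2 ≤ k →
      variance
          (fun ω => (m : ℝ)⁻¹ * ∑ j ∈ Finset.Icc 1 m,
            ((((Finset.Icc 1 k).filter fun i => X i ω = j).card.choose 2 : ℕ) : ℝ)) P
        / (∫ ω, ((m : ℝ)⁻¹ * ∑ j ∈ Finset.Icc 1 m,
            ((((Finset.Icc 1 k).filter fun i => X i ω = j).card.choose 2 : ℕ) : ℝ)) ∂P) ^ 2
      = ((m : ℝ) - 1) / (k.choose 2 : ℝ)) := by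
  classical
  have hm0 : (m : ℝ) ≠ 0 := Nat.cast_ne_zero.mpr (by omega)
  have hmE0 : (m : ℝ≥0∞) ≠ 0 := by simp; omega
  set S : Finset ℕ := Finset.Icc 1 k with hS
  set D : Finset (ℕ × ℕ) := S.offDiag with hD
  set A : ℕ × ℕ → Set Ω := fun p => {ω | X p.1 ω = X p.2 ω} with hA
  set I : (ℕ × ℕ) → Ω → ℝ := fun p => (A p).indicator (fun _ => (1 : ℝ)) with hI
  set f : Ω → ℝ := fun ω => ∑ p ∈ D, I p ω with hf
  set c : ℝ := (m : ℝ)⁻¹ * 2⁻¹ with hc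
  -- basic facts about D
  have hge : ∀ p ∈ D, 1 ≤ p.1 ∧ 1 ≤ p.2 ∧ p.1 ≠ p.2 := by
    intro p hp
    rw [hD, Finset.mem_offDiag] at hp
    obtain ⟨h1, h2, h3⟩ := hp
    rw [hS, Finset.mem_Icc] at h1 h2
    exact ⟨h1.1, h2.1, h3⟩
  have hAmeas : ∀ p ∈ D, MeasurableSet (A p) := by
    intro p hp
    obtain ⟨h1, h2, _⟩ := hge p hp
    exact measurableSet_eq_fun (measX X hmeas h1) (measX X hmeas h2)
  have hPA : ∀ p ∈ D, P (A p) = ((m : ℝ≥0∞))⁻¹ := by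
    intro p hp
    obtain ⟨h1, h2, h3⟩ := hge p hp
    exact probE1 P m X hm hmeas hunif hindep h1 h2 h3
  have hswapmem : ∀ p ∈ D, p.swap ∈ D := by
    intro p hp
    rw [hD, Finset.mem_offDiag] at hp ⊢
    exact ⟨hp.2.1, hp.1, fun h => hp.2.2 h.symm⟩
  have hswapne : ∀ p ∈ D, p.swap ≠ p := by
    intro p hp h
    exact (hge p hp).2.2 (congrArg Prod.fst h).symm
  have hAswap : ∀ p : ℕ × ℕ, A p.swap = A p := fun p => Asymm X p.2 p.1
  have hPAA : ∀ p ∈ D, ∀ q ∈ D, q ≠ p → q ≠ p.swap →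
      P (A p ∩ A q) = ((m : ℝ≥0∞))⁻¹ * ((m : ℝ≥0∞))⁻¹ := by
    intro p hp q hq hqp hqs
    obtain ⟨hp1, hp2, hp3⟩ := hge p hp
    obtain ⟨hq1, hq2, hq3⟩ := hge q hq
    refine probKey P m X hm hmeas hunif hindep hp1 hp2 hq1 hq2 hp3 hq3 ?_ ?_
    · rintro ⟨e1, e2⟩; exact hqp (Prod.ext e1 e2)
    · rintro ⟨e1, e2⟩; exact hqs (Prod.ext e1 e2)
  -- integrability
  have hmulf : ∀ p q : ℕ × ℕ, ∀ ω : Ω,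
      I p ω * I q ω = (A p ∩ A q).indicator (fun _ => (1 : ℝ)) ω := by
    intro p q ω
    rw [hI]
    simp only [Set.indicator_apply, Set.mem_inter_iff]
    by_cases h1 : ω ∈ A p <;> by_cases h2 : ω ∈ A q <;> simp [h1, h2]
  have hIint : ∀ p ∈ D, Integrable (I p) P := by
    intro p hp
    rw [hI]
    exact (integrable_indicator_iff (hAmeas p hp)).mpr
      ((integrableOn_const_iff (C := (1 : ℝ))).mpr (Or.inr (measure_lt_top P _)))
  have hIIint : ∀ p ∈ D, ∀ q ∈ D, Integrable (fun ω => I p ω * I q ω) P := by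
    intro p hp q hq
    have : (fun ω => I p ω * I q ω) = (A p ∩ A q).indicator (fun _ => (1 : ℝ)) :=
      funext fun ω => hmulf p q ω
    rw [this]
    exact (integrable_indicator_iff ((hAmeas p hp).inter (hAmeas q hq))).mpr
      ((integrableOn_const_iff (C := (1 : ℝ))).mpr (Or.inr (measure_lt_top P _)))
  have hmem2 : MemLp f 2 P := by
    rw [hf]
    exact memLp_finsetSum D fun p hp =>
      memLp_indicator_const 2 (hAmeas p hp) 1 (Or.inr (measure_ne_top P _))
  have htoReal : ((m : ℝ≥0∞))⁻¹.toReal = (m : ℝ)⁻¹ := by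
    simp [ENNReal.toReal_inv]
  -- first moment
  have hEI : ∀ p ∈ D, ∫ ω, I p ω ∂P = (m : ℝ)⁻¹ := by
    intro p hp
    rw [hI]
    rw [integral_indicator_const (1 : ℝ) (hAmeas p hp), measureReal_def, hPA p hp, smul_eq_mul, mul_one,
      htoReal]
  have hEf : ∫ ω, f ω ∂P = (D.card : ℝ) * (m : ℝ)⁻¹ := by
    rw [hf, integral_finset_sum D hIint, Finset.sum_congr rfl hEI, Finset.sum_const,
      nsmul_eq_mul]
  -- second moment
  have hEII : ∀ p ∈ D, ∀ q ∈ D, ∫ ω, I p ω * I q ω ∂P = (P (A p ∩ A q)).toReal := by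
    intro p hp q hq
    have : (fun ω => I p ω * I q ω) = (A p ∩ A q).indicator (fun _ => (1 : ℝ)) :=
      funext fun ω => hmulf p q ω
    rw [this, integral_indicator_const (1 : ℝ) ((hAmeas p hp).inter (hAmeas q hq)),
      smul_eq_mul, mul_one, measureReal_def]
  have hinner : ∀ p ∈ D, ∑ q ∈ D, ∫ ω, I p ω * I q ω ∂P
      = ((D.card : ℝ) - 2) * ((m : ℝ)⁻¹ * (m : ℝ)⁻¹) + 2 * (m : ℝ)⁻¹ := by
    intro p hp
    have hsub : ({p, p.swap} : Finset (ℕ × ℕ)) ⊆ D := by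
      intro q hq
      rcases Finset.mem_insert.mp hq with rfl | hq
      · exact hp
      · rw [Finset.mem_singleton.mp hq]; exact hswapmem p hp
    have hpair : ({p, p.swap} : Finset (ℕ × ℕ)).card = 2 :=
      Finset.card_pair (fun h => hswapne p hp h.symm)
    have hcard2 : 2 ≤ D.card := hpair ▸ Finset.card_le_card hsub
    rw [← Finset.sum_sdiff hsub]
    have hrest : ∀ q ∈ D \ {p, p.swap},
        ∫ ω, I p ω * I q ω ∂P = (m : ℝ)⁻¹ * (m : ℝ)⁻¹ := by
      intro q hq
      rw [Finset.mem_sdiff] at hq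
      obtain ⟨hqD, hqn⟩ := hq
      simp only [Finset.mem_insert, Finset.mem_singleton, not_or] at hqn
      rw [hEII p hp q hqD, hPAA p hp q hqD hqn.1 hqn.2, ENNReal.toReal_mul, htoReal]
    have hpairsum : ∑ q ∈ ({p, p.swap} : Finset (ℕ × ℕ)), ∫ ω, I p ω * I q ω ∂P
        = 2 * (m : ℝ)⁻¹ := by
      rw [Finset.sum_pair (fun h => hswapne p hp h.symm)]
      rw [hEII p hp p hp, hEII p hp p.swap (hswapmem p hp), hAswap p, Set.inter_self,
        hPA p hp, htoReal]
      ring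
    rw [Finset.sum_congr rfl hrest, hpairsum, Finset.sum_const, nsmul_eq_mul,
      Finset.card_sdiff_of_subset hsub, hpair, Nat.cast_sub hcard2]
    norm_num
  have hEff : ∫ ω, (f ω) ^ 2 ∂P
      = (D.card : ℝ) * (((D.card : ℝ) - 2) * ((m : ℝ)⁻¹ * (m : ℝ)⁻¹) + 2 * (m : ℝ)⁻¹) := by
    have hsq : ∀ ω : Ω, (f ω) ^ 2 = ∑ p ∈ D, ∑ q ∈ D, I p ω * I q ω := by
      intro ω
      rw [hf, sq, Finset.sum_mul_sum]
    calc ∫ ω, (f ω) ^ 2 ∂P = ∫ ω, ∑ p ∈ D, ∑ q ∈ D, I p ω * I q ω ∂P := by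
          exact integral_congr_ae (Filter.Eventually.of_forall fun ω => hsq ω)
      _ = ∑ p ∈ D, ∑ q ∈ D, ∫ ω, I p ω * I q ω ∂P := by
          rw [integral_finset_sum D (fun p hp => integrable_finset_sum D
            (fun q hq => hIIint p hp q hq))]
          exact Finset.sum_congr rfl fun p hp =>
            integral_finset_sum D (fun q hq => hIIint p hp q hq)
      _ = ∑ p ∈ D, (((D.card : ℝ) - 2) * ((m : ℝ)⁻¹ * (m : ℝ)⁻¹) + 2 * (m : ℝ)⁻¹) :=
          Finset.sum_congr rfl hinner
      _ = _ := by rw [Finset.sum_const, nsmul_eq_mul]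
  -- cardinality of D
  have hDcard : (D.card : ℝ) = (k : ℝ) * k - k := by
    have h1 : D.card = k * k - k := by
      rw [hD, Finset.offDiag_card, hS, Nat.card_Icc, Nat.add_sub_cancel]
    have h2 : k ≤ k * k := by
      rcases Nat.eq_zero_or_pos k with h | h
      · simp [h]
      · exact Nat.le_mul_of_pos_left k h
    rw [h1, Nat.cast_sub h2, Nat.cast_mul]
  have hchoose : (k.choose 2 : ℝ) = ((k : ℝ) * k - k) / 2 := by
    rw [Nat.cast_choose_two]; ring
  -- a.e. range
  have hran : ∀ᵐ ω ∂P, ∀ i ∈ S, X i ω ∈ Finset.Icc 1 m := by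
    rw [Filter.eventually_all_finset]
    intro i hi
    have hi1 : 1 ≤ i := ((Finset.mem_Icc).mp (hS ▸ hi)).1
    have hmi := measX X hmeas hi1
    have hU : P {ω | X i ω ∈ Finset.Icc 1 m} = 1 := by
      have hset : {ω | X i ω ∈ Finset.Icc 1 m}
          = ⋃ j ∈ (Finset.Icc 1 m : Finset ℕ), {ω | X i ω = j} := by
        ext ω
        simp only [Set.mem_setOf_eq, Set.mem_iUnion]
        exact ⟨fun h => ⟨X i ω, h, rfl⟩, fun ⟨j, hj, he⟩ => he ▸ hj⟩
      rw [hset, measure_biUnion_finset]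
      · have : ∀ j ∈ Finset.Icc 1 m, P {ω | X i ω = j} = ((m : ℝ≥0∞))⁻¹ := by
          intro j hj
          rw [pX P m X hmeas hunif hi1 j, if_pos hj]
        rw [Finset.sum_congr rfl this, Finset.sum_const, Nat.card_Icc,
          Nat.add_sub_cancel, nsmul_eq_mul, ENNReal.mul_inv_cancel hmE0 (by simp)]
      · intro j hj j' hj' hne
        refine Set.disjoint_left.mpr fun ω h1 h2 => hne ?_
        exact h1.symm.trans h2
      · intro j _
        exact hmi (measurableSet_singleton j)
    have hmeasU : MeasurableSet {ω | X i ω ∈ Finset.Icc 1 m} := by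
      have : {ω | X i ω ∈ Finset.Icc 1 m} = X i ⁻¹' ↑(Finset.Icc 1 m) := rfl
      rw [this]
      exact hmi (Finset.Icc 1 m).measurableSet
    rw [MeasureTheory.ae_iff]
    have hcompl : {ω | ¬ X i ω ∈ Finset.Icc 1 m} = {ω | X i ω ∈ Finset.Icc 1 m}ᶜ := rfl
    rw [hcompl, prob_compl_eq_zero_iff hmeasU]
    exact hU
  -- the combinatorial identity, a.e.
  have haeq : (fun ω => (m : ℝ)⁻¹ * ∑ j ∈ Finset.Icc 1 m,
      (((S.filter fun i => X i ω = j).card.choose 2 : ℕ) : ℝ)) =ᵐ[P] c • f := by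
    filter_upwards [hran] with ω hω
    have hfcard : f ω = ((D.filter fun p => X p.1 ω = X p.2 ω).card : ℝ) := by
      show (∑ p ∈ D, I p ω) = _
      have : ∀ p ∈ D, I p ω = if X p.1 ω = X p.2 ω then (1 : ℝ) else 0 := by
        intro p _
        rw [hI]
        simp only [Set.indicator_apply]
        congr 1
      rw [Finset.sum_congr rfl this, Finset.sum_boole]
    have hbi : D.filter (fun p => X p.1 ω = X p.2 ω)
        = (Finset.Icc 1 m).biUnion (fun j => (S.filter fun i => X i ω = j).offDiag) := by
      ext p
      simp only [Finset.mem_filter, Finset.mem_biUnion, Finset.mem_offDiag, hD]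
      constructor
      · rintro ⟨⟨h1, h2, h3⟩, h4⟩
        exact ⟨X p.1 ω, hω p.1 h1, ⟨h1, rfl⟩, ⟨h2, h4.symm⟩, h3⟩
      · rintro ⟨j, _, ⟨h1, e1⟩, ⟨h2, e2⟩, h3⟩
        exact ⟨⟨h1, h2, h3⟩, e1.trans e2.symm⟩
    have hchoose2 : ∀ T : ℕ, T.choose 2 * 2 = T * T - T := by
      intro T
      rcases T with _ | t
      · simp
      · rw [Nat.choose_two_right, Nat.div_mul_cancel]
        · rw [Nat.succ_sub_one, Nat.mul_succ]
          omega
        · rw [Nat.succ_sub_one, mul_comm]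
          exact (Nat.even_mul_succ_self t).two_dvd
    have hnat : (∑ j ∈ Finset.Icc 1 m, (S.filter fun i => X i ω = j).card.choose 2) * 2
        = (D.filter fun p => X p.1 ω = X p.2 ω).card := by
      rw [hbi, Finset.card_biUnion]
      · rw [Finset.sum_mul]
        refine Finset.sum_congr rfl fun j _ => ?_
        rw [hchoose2, Finset.offDiag_card]
      · intro j _ j' _ hne
        refine Finset.disjoint_left.mpr fun p hp hp' => hne ?_
        rw [Finset.mem_offDiag] at hp hp'
        exact (Finset.mem_filter.mp hp.1).2.symm.trans (Finset.mem_filter.mp hp'.1).2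
    show (m : ℝ)⁻¹ * ∑ j ∈ Finset.Icc 1 m,
        (((S.filter fun i => X i ω = j).card.choose 2 : ℕ) : ℝ) = c * f ω
    rw [hfcard, hc, ← hnat]
    push_cast
    ring
  -- variance of f
  have hvarf : variance f P = (D.card : ℝ) * (((D.card : ℝ) - 2) * ((m : ℝ)⁻¹ * (m : ℝ)⁻¹)
      + 2 * (m : ℝ)⁻¹) - ((D.card : ℝ) * (m : ℝ)⁻¹) ^ 2 := by
    rw [variance_eq_sub hmem2]
    have h1 : ∫ x, (f ^ 2) x ∂P = ∫ ω, (f ω) ^ 2 ∂P := by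
      exact integral_congr_ae (Filter.Eventually.of_forall fun ω => by simp [Pi.pow_apply])
    rw [h1, hEff, hEf]
  -- main variance formula
  have hvarH : variance
      (fun ω => (m : ℝ)⁻¹ * ∑ j ∈ Finset.Icc 1 m,
        (((S.filter fun i => X i ω = j).card.choose 2 : ℕ) : ℝ)) P
      = (k.choose 2 : ℝ) / (m : ℝ) ^ 3 - (k.choose 2 : ℝ) / (m : ℝ) ^ 4 := by
    rw [variance_congr' P haeq, variance_smul, hvarf, hDcard, hchoose, hc]
    field_simp
    ring
  -- expectation of H
  have hEH : ∫ ω, ((m : ℝ)⁻¹ * ∑ j ∈ Finset.Icc 1 m,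
      (((S.filter fun i => X i ω = j).card.choose 2 : ℕ) : ℝ)) ∂P
      = (k.choose 2 : ℝ) / (m : ℝ) ^ 2 := by
    rw [integral_congr_ae haeq]
    simp only [Pi.smul_apply, smul_eq_mul]
    rw [integral_const_mul, hEf, hDcard, hchoose, hc]
    rw [eq_div_iff (pow_ne_zero 2 hm0), eq_div_iff (two_ne_zero (α := ℝ))]
    field_simp
  refine ⟨hvarH, fun hk => ?_⟩
  have hC : (0 : ℝ) < (k.choose 2 : ℝ) := by
    exact_mod_cast Nat.choose_pos hk
  rw [hvarH, hEH]
  field_simp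
end

section
/- Let m ≥ 1 and k ≥ 1 be integers and let X_0, X_1, X_2, … be i.i.d. random variables uniform on [m] := {1,…,m}. Then for any indices 0 ≤ i < j (including overlapping windows, i.e., j − i < k), P( X_{i+r} = X_{j+r} for all 0 ≤ r < k ) = m^{−k}. -/
open MeasureTheory ProbabilityTheory Filter
open scoped ENNReal NNReal

/-- Let `m ≥ 1`, `k ≥ 1`, and let `X 0, X 1, X 2, …` be
i.i.d. uniform on `[m] = {1,…,m}`.  Then for any indices `0 ≤ i < j`
(including overlapping windows, i.e. `j - i < k`),
`P(X (i+r) = X (j+r) for all 0 ≤ r < k) = m^{-k}`. -/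
theorem stmt_17
    (m k : ℕ) (hm : 1 ≤ m) (hk : 1 ≤ k)
    {Ω : Type*} [MeasurableSpace Ω] (P : Measure Ω) [IsProbabilityMeasure P]
    (X : ℕ → Ω → ℕ)
    (hmeas : ∀ n, Measurable (X n))
    (hunif : ∀ n (j : ℕ),
      Measure.map (X n) P {j}
        = if j ∈ Finset.Icc 1 m then ((m : ℝ≥0∞))⁻¹ else 0)
    (hindep : iIndepFun X P) :
    ∀ i j : ℕ, i < j →
      P {ω | ∀ r < k, X (i + r) ω = X (j + r) ω} = ((m : ℝ≥0∞) ^ k)⁻¹ := by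
  intro i j hij
  have hm0 : (m : ℝ≥0∞) ≠ 0 := by
    exact_mod_cast Nat.cast_ne_zero.mpr (by omega)
  have hmtop : (m : ℝ≥0∞) ≠ ⊤ := ENNReal.natCast_ne_top m
  -- probability that X n takes a specific value
  have hval : ∀ n v, P (X n ⁻¹' {v})
      = if v ∈ Finset.Icc 1 m then ((m : ℝ≥0∞))⁻¹ else 0 := by
    intro n v
    rw [← Measure.map_apply (hmeas n) (measurableSet_singleton v), hunif n v]
  -- X n lands in Icc 1 m almost surely
  have hIcc : ∀ n, P (X n ⁻¹' ↑(Finset.Icc 1 m)) = 1 := by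
    intro n
    have : (X n ⁻¹' ↑(Finset.Icc 1 m)) = ⋃ v ∈ Finset.Icc 1 m, X n ⁻¹' {v} := by
      ext ω; simp
    rw [this, measure_biUnion_finset ?_ (fun v _ => hmeas n (measurableSet_singleton v))]
    · have : ∀ v ∈ Finset.Icc 1 m, P (X n ⁻¹' {v}) = ((m : ℝ≥0∞))⁻¹ := by
        intro v hv; rw [hval n v, if_pos hv]
      rw [Finset.sum_congr rfl this, Finset.sum_const, Nat.card_Icc]
      simp only [Nat.add_sub_cancel, nsmul_eq_mul]
      exact ENNReal.mul_inv_cancel (by exact_mod_cast Nat.cast_ne_zero.mpr (by omega)) hmtop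
    · intro a _ b _ hab
      exact Set.disjoint_left.mpr (fun ω ha hb => hab (by
        simp only [Set.mem_preimage, Set.mem_singleton_iff] at ha hb
        rw [← ha, ← hb]))
  have hnull : ∀ n, P ((X n ⁻¹' ↑(Finset.Icc 1 m))ᶜ) = 0 := by
    intro n
    rw [measure_compl (hmeas n (Finset.Icc 1 m).measurableSet) (measure_ne_top P _),
      hIcc, measure_univ, tsub_self]
  -- main induction
  have main : ∀ K : ℕ, P {ω | ∀ r < K, X (i + r) ω = X (j + r) ω}
      = ((m : ℝ≥0∞) ^ K)⁻¹ := by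
    intro K
    induction K with
    | zero => simp
    | succ K ih =>
      have hiK : i + K ∈ Finset.range (j + K) := by
        simp only [Finset.mem_range]; omega
      -- the tuple of the first j+K variables
      let Z : Ω → ((Finset.range (j + K) : Finset ℕ) → ℕ) := fun ω t => X t ω
      have hZmeas : Measurable Z := measurable_pi_lambda _ (fun t => hmeas t)
      -- independence of the tuple and X (j+K)
      have hdisj : Disjoint (Finset.range (j + K)) ({j + K} : Finset ℕ) := by
        simp [Finset.disjoint_singleton_right]
      have hind0 := hindep.indepFun_finset (Finset.range (j + K)) {j + K} hdisj hmeas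
      have hind : IndepFun Z (X (j + K)) P := by
        have := hind0.comp measurable_id
          (measurable_pi_apply (⟨j + K, Finset.mem_singleton_self _⟩ :
            (({j + K} : Finset ℕ) : Type)))
        exact this
      -- the event on the first K coordinates, as a preimage under Z
      let B : Set ((Finset.range (j + K) : Finset ℕ) → ℕ) :=
        ⋂ r, ⋂ (hr : r < K),
          {y | y ⟨i + r, by simp only [Finset.mem_range]; omega⟩
             = y ⟨j + r, by simp only [Finset.mem_range]; omega⟩}
      have hBmeas : MeasurableSet B :=
        MeasurableSet.iInter fun r => MeasurableSet.iInter fun hr =>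
          measurableSet_eq_fun (measurable_pi_apply _) (measurable_pi_apply _)
      have hEeq : Z ⁻¹' B = {ω | ∀ r < K, X (i + r) ω = X (j + r) ω} := by
        ext ω
        simp only [Set.mem_preimage, B, Set.mem_iInter, Set.mem_setOf_eq, Z]
      -- the sets F v
      let F : ℕ → Set Ω := fun v => {ω | ∀ r < K, X (i + r) ω = X (j + r) ω}
        ∩ X (i + K) ⁻¹' {v}
      have hFpre : ∀ v, F v = Z ⁻¹' (B ∩ {y | y ⟨i + K, hiK⟩ = v}) := by
        intro v
        rw [Set.preimage_inter, hEeq]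
        rfl
      have hFmeas : ∀ v, MeasurableSet (F v) := by
        intro v
        rw [hFpre v]
        exact hZmeas (hBmeas.inter
          (measurableSet_eq_fun (measurable_pi_apply _) measurable_const))
      -- product formula
      have hmul : ∀ v : ℕ, P (F v ∩ X (j + K) ⁻¹' {v})
          = P (F v) * P (X (j + K) ⁻¹' {v}) := by
        intro v
        rw [hFpre v]
        exact hind.measure_inter_preimage_eq_mul _ _
          (hBmeas.inter
            (measurableSet_eq_fun (measurable_pi_apply _) measurable_const))
          (measurableSet_singleton v)
      -- decomposition of the K+1 event
      have hdecomp : {ω | ∀ r < K + 1, X (i + r) ω = X (j + r) ω}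
          = ⋃ v : ℕ, (F v ∩ X (j + K) ⁻¹' {v}) := by
        ext ω
        simp only [Set.mem_setOf_eq, Set.mem_iUnion, Set.mem_inter_iff, Set.mem_preimage,
          Set.mem_singleton_iff, F]
        constructor
        · intro h
          exact ⟨X (i + K) ω, ⟨fun r hr => h r (by omega), rfl⟩, (h K (by omega)).symm⟩
        · rintro ⟨v, ⟨h1, h2⟩, h3⟩ r hr
          rcases Nat.lt_succ_iff_lt_or_eq.mp hr with hr' | hr'
          · exact h1 r hr'
          · subst hr'; rw [h2, h3]
      have hdisjF : Pairwise (Function.onFun Disjoint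
          (fun v => F v ∩ X (j + K) ⁻¹' {v})) := by
        intro a b hab
        refine Set.disjoint_left.mpr (fun ω ha hb => hab ?_)
        have h1 := ha.2
        have h2 := hb.2
        simp only [Set.mem_preimage, Set.mem_singleton_iff] at h1 h2
        rw [← h1, ← h2]
      rw [hdecomp, measure_iUnion hdisjF
        (fun v => (hFmeas v).inter (hmeas _ (measurableSet_singleton v)))]
      have hterm : ∀ v : ℕ, P (F v ∩ X (j + K) ⁻¹' {v})
          = P (F v) * (if v ∈ Finset.Icc 1 m then ((m : ℝ≥0∞))⁻¹ else 0) := by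
        intro v; rw [hmul v, hval (j + K) v]
      rw [tsum_congr hterm, tsum_eq_sum (s := Finset.Icc 1 m)
        (fun v hv => by rw [if_neg hv, mul_zero])]
      have hsum : ∑ v ∈ Finset.Icc 1 m,
          P (F v) * (if v ∈ Finset.Icc 1 m then ((m : ℝ≥0∞))⁻¹ else 0)
          = (∑ v ∈ Finset.Icc 1 m, P (F v)) * ((m : ℝ≥0∞))⁻¹ := by
        rw [Finset.sum_mul]
        exact Finset.sum_congr rfl (fun v hv => by rw [if_pos hv])
      rw [hsum]
      -- the sum of P (F v) over Icc is P of the K-event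
      have hFsum : ∑ v ∈ Finset.Icc 1 m, P (F v)
          = P ({ω | ∀ r < K, X (i + r) ω = X (j + r) ω}
              ∩ X (i + K) ⁻¹' ↑(Finset.Icc 1 m)) := by
        rw [← measure_biUnion_finset ?_ (fun v _ => hFmeas v)]
        · congr 1
          ext ω
          simp only [Set.mem_iUnion, Set.mem_inter_iff, Set.mem_preimage,
            Set.mem_singleton_iff, Set.mem_setOf_eq, Finset.coe_Icc, Set.mem_Icc, F]
          constructor
          · rintro ⟨v, hv, h1, h2⟩
            exact ⟨h1, h2 ▸ by simpa using hv⟩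
          · rintro ⟨h1, h2⟩
            exact ⟨X (i + K) ω, by simpa using h2, h1, rfl⟩
        · intro a _ b _ hab
          refine Set.disjoint_left.mpr (fun ω ha hb => hab ?_)
          have h1 := ha.2
          have h2 := hb.2
          simp only [Set.mem_preimage, Set.mem_singleton_iff] at h1 h2
          rw [← h1, ← h2]
      rw [hFsum, measure_inter_conull (by simpa using hnull (i + K)), ih,
        pow_succ, ENNReal.mul_inv (Or.inl (pow_ne_zero K hm0)) (Or.inl (ENNReal.pow_ne_top hmtop))]
  exact main k
end

section
/- Let m ≥ 1 and k ≥ 1 be integers and let X_0, X_1, X_2, … be i.i.d. random variables uniform on [m] := {1,…,m}; write W_n := (X_n, …, X_{n+k-1}) and G_{(i,j)} for the event {W_i = W_j}. Then for any two distinct pairs (i,j) ≠ (i',j') with i < j and i' < j', P( G_{(i,j)} ∩ G_{(i',j')} ) ≤ m^{−k−1}. -/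
open MeasureTheory ProbabilityTheory Filter
open scoped ENNReal NNReal

/-- If we have `n` constraints `X (a t) = X (b t)` with `a t < b t` and the larger
endpoints `b t` pairwise distinct, then the probability that all of them hold is at most
`m⁻ⁿ`, provided each `X n` hits each point with probability at most `m⁻¹`. -/
private lemma aux_bound
    {Ω : Type*} [MeasurableSpace Ω] (P : Measure Ω) [IsProbabilityMeasure P]
    (m : ℕ) (X : ℕ → Ω → ℕ) (hmeas : ∀ n, Measurable (X n))
    (hunif : ∀ n (v : ℕ), P (X n ⁻¹' {v}) ≤ ((m : ℝ≥0∞))⁻¹)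
    (hindep : iIndepFun X P) :
    ∀ (n : ℕ) (a b : Fin n → ℕ), Function.Injective b → (∀ t, a t < b t) →
      P {ω | ∀ t, X (a t) ω = X (b t) ω} ≤ ((m : ℝ≥0∞)⁻¹) ^ n := by
  intro n
  induction n with
  | zero =>
    intro a b _ _
    have : {ω : Ω | ∀ t : Fin 0, X (a t) ω = X (b t) ω} = Set.univ := by
      ext ω; simp
    simp [this]
  | succ n ih =>
    intro a b hbinj hab
    obtain ⟨t0, ht0⟩ := Finite.exists_max b
    set N : ℕ := b t0 with hN
    set A : ℕ := a t0 with hA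
    set a' : Fin n → ℕ := fun s => a (t0.succAbove s) with ha'
    set b' : Fin n → ℕ := fun s => b (t0.succAbove s) with hb'
    have hb'lt : ∀ s, b' s < N := by
      intro s
      exact lt_of_le_of_ne (ht0 _) (fun h => Fin.succAbove_ne t0 s (hbinj h))
    have ha'lt : ∀ s, a' s < N := fun s => (hab _).trans (hb'lt s)
    have hAlt : A < N := hab t0
    set E : Set Ω := ⋂ s : Fin n, {ω | X (a' s) ω = X (b' s) ω} with hE
    have hEmeas : MeasurableSet E :=
      MeasurableSet.iInter fun s =>
        measurableSet_eq_fun (hmeas _) (hmeas _)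
    have hsplit : {ω | ∀ t, X (a t) ω = X (b t) ω}
        = E ∩ {ω | X A ω = X N ω} := by
      ext ω
      simp only [Set.mem_setOf_eq, Set.mem_inter_iff, hE, Set.mem_iInter]
      rw [Fin.forall_iff_succAbove t0]
      tauto
    -- independence of the coordinates below N from coordinate N
    have hST : Disjoint (Finset.range N) ({N} : Finset ℕ) := by simp
    have hInd := hindep.indepFun_finset (Finset.range N) {N} hST hmeas
    -- key estimate
    have hkey : ∀ v : ℕ, P ((E ∩ X A ⁻¹' {v}) ∩ X N ⁻¹' {v})
        = P (E ∩ X A ⁻¹' {v}) * P (X N ⁻¹' {v}) := by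
      intro v
      have hAmem : A ∈ Finset.range N := Finset.mem_range.2 hAlt
      have hNmem : N ∈ ({N} : Finset ℕ) := Finset.mem_singleton_self N
      set Y : Ω → (↥(Finset.range N) → ℕ) := fun ω i => X i ω with hY
      set Z : Ω → (↥({N} : Finset ℕ) → ℕ) := fun ω i => X i ω with hZ
      set Av : Set (↥(Finset.range N) → ℕ) :=
        (⋂ s : Fin n, {y | y ⟨a' s, Finset.mem_range.2 (ha'lt s)⟩
            = y ⟨b' s, Finset.mem_range.2 (hb'lt s)⟩}) ∩ {y | y ⟨A, hAmem⟩ = v} with hAv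
      set Bv : Set (↥({N} : Finset ℕ) → ℕ) := {y | y ⟨N, hNmem⟩ = v} with hBv
      have hAvmeas : MeasurableSet Av := by
        refine MeasurableSet.inter ?_ ?_
        · exact MeasurableSet.iInter fun s =>
            measurableSet_eq_fun (measurable_pi_apply _) (measurable_pi_apply _)
        · have h := (measurable_pi_apply (X := fun _ : ↥(Finset.range N) => ℕ)
            ⟨A, hAmem⟩) (measurableSet_singleton v)
          exact h
      have hBvmeas : MeasurableSet Bv := by
        have h := (measurable_pi_apply (X := fun _ : ↥({N} : Finset ℕ) => ℕ)
          ⟨N, hNmem⟩) (measurableSet_singleton v)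
        exact h
      have h1 : E ∩ X A ⁻¹' {v} = Y ⁻¹' Av := by
        ext ω
        simp only [hE, hAv, hY, Set.mem_inter_iff, Set.mem_iInter, Set.mem_preimage,
          Set.mem_setOf_eq, Set.mem_singleton_iff]
      have h2 : X N ⁻¹' {v} = Z ⁻¹' Bv := by
        ext ω
        simp only [hBv, hZ, Set.mem_preimage, Set.mem_setOf_eq, Set.mem_singleton_iff]
      rw [h1, h2]
      exact hInd.measure_inter_preimage_eq_mul Av Bv hAvmeas hBvmeas
    -- sum over values of X A
    have hmeasAB : ∀ v : ℕ, MeasurableSet ((E ∩ X A ⁻¹' {v}) ∩ X N ⁻¹' {v}) := by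
      intro v
      exact (hEmeas.inter ((hmeas A) (measurableSet_singleton v))).inter
        ((hmeas N) (measurableSet_singleton v))
    have hdisj : Pairwise (Function.onFun Disjoint
        (fun v : ℕ => (E ∩ X A ⁻¹' {v}) ∩ X N ⁻¹' {v})) := by
      intro v w hvw
      refine Set.disjoint_left.2 ?_
      rintro ω ⟨⟨-, hv⟩, -⟩ ⟨⟨-, hw⟩, -⟩
      exact hvw (hv.symm.trans hw)
    have hunion : E ∩ {ω | X A ω = X N ω}
        = ⋃ v : ℕ, (E ∩ X A ⁻¹' {v}) ∩ X N ⁻¹' {v} := by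
      ext ω
      simp only [Set.mem_inter_iff, Set.mem_setOf_eq, Set.mem_iUnion, Set.mem_preimage,
        Set.mem_singleton_iff]
      constructor
      · rintro ⟨hEω, hω⟩; exact ⟨X A ω, ⟨hEω, rfl⟩, hω.symm⟩
      · rintro ⟨v, ⟨hEω, hv⟩, hw⟩; exact ⟨hEω, hv.trans hw.symm⟩
    have hdisj2 : Pairwise (Function.onFun Disjoint
        (fun v : ℕ => E ∩ X A ⁻¹' {v})) := by
      intro v w hvw
      refine Set.disjoint_left.2 ?_
      rintro ω ⟨-, hv⟩ ⟨-, hw⟩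
      exact hvw (hv.symm.trans hw)
    have hmeasA : ∀ v : ℕ, MeasurableSet (E ∩ X A ⁻¹' {v}) := fun v =>
      hEmeas.inter ((hmeas A) (measurableSet_singleton v))
    have hEunion : E = ⋃ v : ℕ, E ∩ X A ⁻¹' {v} := by
      ext ω
      simp only [Set.mem_iUnion, Set.mem_inter_iff, Set.mem_preimage, Set.mem_singleton_iff]
      constructor
      · intro h; exact ⟨X A ω, h, rfl⟩
      · rintro ⟨v, h, -⟩; exact h
    have hbound : P (E ∩ {ω | X A ω = X N ω}) ≤ ((m : ℝ≥0∞))⁻¹ * P E := by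
      rw [hunion, measure_iUnion hdisj hmeasAB]
      calc ∑' v : ℕ, P ((E ∩ X A ⁻¹' {v}) ∩ X N ⁻¹' {v})
          = ∑' v : ℕ, P (E ∩ X A ⁻¹' {v}) * P (X N ⁻¹' {v}) := by
            exact tsum_congr hkey
        _ ≤ ∑' v : ℕ, P (E ∩ X A ⁻¹' {v}) * ((m : ℝ≥0∞))⁻¹ := by
            exact ENNReal.tsum_le_tsum fun v =>
              mul_le_mul_right (hunif N v) _
        _ = (∑' v : ℕ, P (E ∩ X A ⁻¹' {v})) * ((m : ℝ≥0∞))⁻¹ := by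
            rw [ENNReal.tsum_mul_right]
        _ = P E * ((m : ℝ≥0∞))⁻¹ := by
            rw [← measure_iUnion hdisj2 hmeasA, ← hEunion]
        _ = ((m : ℝ≥0∞))⁻¹ * P E := mul_comm _ _
    have hIH : P E ≤ ((m : ℝ≥0∞)⁻¹) ^ n := by
      have hb'inj : Function.Injective b' := fun s s' h =>
        Fin.succAbove_right_injective (hbinj h)
      have := ih a' b' hb'inj (fun s => hab _)
      have hEeq : E = {ω | ∀ s : Fin n, X (a' s) ω = X (b' s) ω} := by
        ext ω; simp [hE]
      rwa [← hEeq] at this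
    calc P {ω | ∀ t, X (a t) ω = X (b t) ω}
        = P (E ∩ {ω | X A ω = X N ω}) := by rw [hsplit]
      _ ≤ ((m : ℝ≥0∞))⁻¹ * P E := hbound
      _ ≤ ((m : ℝ≥0∞))⁻¹ * ((m : ℝ≥0∞)⁻¹) ^ n := mul_le_mul_right hIH _
      _ = ((m : ℝ≥0∞)⁻¹) ^ (n + 1) := by rw [pow_succ, mul_comm]

/-- Helper applying `aux_bound` to `k` window constraints from the pair `(c,d)`
plus one extra constraint `X u = X v` with `v < d`. -/
private lemma helper_bound
    {Ω : Type*} [MeasurableSpace Ω] (P : Measure Ω) [IsProbabilityMeasure P]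
    (m k : ℕ) (X : ℕ → Ω → ℕ) (hmeas : ∀ n, Measurable (X n))
    (hunif : ∀ n (v : ℕ), P (X n ⁻¹' {v}) ≤ ((m : ℝ≥0∞))⁻¹)
    (hindep : iIndepFun X P)
    (c d u v : ℕ) (hcd : c < d) (huv : u < v) (hvd : v < d)
    (S : Set Ω)
    (hS : S ⊆ {ω | (∀ r < k, X (c + r) ω = X (d + r) ω) ∧ X u ω = X v ω}) :
    P S ≤ ((m : ℝ≥0∞)⁻¹) ^ (k + 1) := by
  set a : Fin (k + 1) → ℕ := Fin.snoc (fun t : Fin k => c + (t : ℕ)) u with ha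
  set b : Fin (k + 1) → ℕ := Fin.snoc (fun t : Fin k => d + (t : ℕ)) v with hb
  have hbinj : Function.Injective b := by
    intro s t hst
    induction s using Fin.lastCases with
    | last =>
      induction t using Fin.lastCases with
      | last => rfl
      | cast t =>
        exfalso
        rw [hb, Fin.snoc_last, Fin.snoc_castSucc] at hst
        omega
    | cast s =>
      induction t using Fin.lastCases with
      | last =>
        exfalso
        rw [hb, Fin.snoc_last, Fin.snoc_castSucc] at hst
        omega
      | cast t =>
        rw [hb, Fin.snoc_castSucc, Fin.snoc_castSucc] at hst
        have : (s : ℕ) = (t : ℕ) := by omega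
        exact congrArg Fin.castSucc (Fin.ext this)
  have hab : ∀ t, a t < b t := by
    intro t
    induction t using Fin.lastCases with
    | last => rw [ha, hb, Fin.snoc_last, Fin.snoc_last]; exact huv
    | cast t =>
      rw [ha, hb, Fin.snoc_castSucc, Fin.snoc_castSucc]
      omega
  have hsub : S ⊆ {ω | ∀ t : Fin (k + 1), X (a t) ω = X (b t) ω} := by
    intro ω hω
    have hω' := hS hω
    intro t
    induction t using Fin.lastCases with
    | last => rw [ha, hb, Fin.snoc_last, Fin.snoc_last]; exact hω'.2
    | cast t =>
      rw [ha, hb, Fin.snoc_castSucc, Fin.snoc_castSucc]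
      exact hω'.1 t t.isLt
  calc P S ≤ P {ω | ∀ t : Fin (k + 1), X (a t) ω = X (b t) ω} := measure_mono hsub
    _ ≤ ((m : ℝ≥0∞)⁻¹) ^ (k + 1) :=
        aux_bound P m X hmeas hunif hindep (k + 1) a b hbinj hab

/-- Let `m ≥ 1`, `k ≥ 1`, and let `X 0, X 1, X 2, …` be
i.i.d. uniform on `[m] = {1,…,m}`.  Write `G (i,j)` for the event that the
windows `W i = (X i, …, X (i+k-1))` and `W j` coincide.  Then for any two
distinct pairs `(i,j) ≠ (i',j')` with `i < j` and `i' < j'`,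
`P(G (i,j) ∩ G (i',j')) ≤ m^{-(k+1)}`. -/
theorem stmt_18
    (m k : ℕ) (hm : 1 ≤ m) (hk : 1 ≤ k)
    {Ω : Type*} [MeasurableSpace Ω] (P : Measure Ω) [IsProbabilityMeasure P]
    (X : ℕ → Ω → ℕ)
    (hmeas : ∀ n, Measurable (X n))
    (hunif : ∀ n (j : ℕ),
      Measure.map (X n) P {j}
        = if j ∈ Finset.Icc 1 m then ((m : ℝ≥0∞))⁻¹ else 0)
    (hindep : iIndepFun X P) :
    ∀ i j i' j' : ℕ, i < j → i' < j' → (i, j) ≠ (i', j') →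
      P {ω | (∀ r < k, X (i + r) ω = X (j + r) ω) ∧
             (∀ r < k, X (i' + r) ω = X (j' + r) ω)}
        ≤ ((m : ℝ≥0∞) ^ (k + 1))⁻¹ := by
  intro i j i' j' hij hi'j' hne
  have hunif' : ∀ n (v : ℕ), P (X n ⁻¹' {v}) ≤ ((m : ℝ≥0∞))⁻¹ := by
    intro n v
    have h := hunif n v
    rw [Measure.map_apply (hmeas n) (measurableSet_singleton v)] at h
    rw [h]
    split_ifs
    · exact le_rfl
    · exact zero_le
  rw [ENNReal.inv_pow]
  rcases lt_trichotomy j j' with hjj' | hjj' | hjj'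
  · -- j < j' : base pair (i', j'), extra constraint X i = X j with j < j'
    refine helper_bound P m k X hmeas hunif' hindep i' j' i j hi'j' hij hjj' _ ?_
    rintro ω ⟨h1, h2⟩
    refine ⟨h2, ?_⟩
    have := h1 0 hk
    simpa using this
  · -- j = j' : then i ≠ i'; extra constraint X (min i i') = X (max i i')
    have hii' : i ≠ i' := by
      intro h; exact hne (by rw [h, hjj'])
    refine helper_bound P m k X hmeas hunif' hindep i j (min i i') (max i i')
      hij (min_lt_max.2 hii') (max_lt hij (hjj' ▸ hi'j')) _ ?_
    rintro ω ⟨h1, h2⟩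
    refine ⟨h1, ?_⟩
    have hXi : X i ω = X j ω := by have := h1 0 hk; simpa using this
    have hXi' : X i' ω = X j ω := by
      have := h2 0 hk; rw [← hjj'] at this; simpa using this
    have hXii' : X i ω = X i' ω := hXi.trans hXi'.symm
    rcases le_total i i' with h | h
    · rw [min_eq_left h, max_eq_right h]; exact hXii'
    · rw [min_eq_right h, max_eq_left h]; exact hXii'.symm
  · -- j' < j : base pair (i, j), extra constraint X i' = X j'
    refine helper_bound P m k X hmeas hunif' hindep i j i' j' hij hi'j' hjj' _ ?_
    rintro ω ⟨h1, h2⟩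
    refine ⟨h1, ?_⟩
    have := h2 0 hk
    simpa using this
end
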